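/- arXiv:2304.04418 — 3 statements merged into one kernel-verified Lean document; each statement's English description precedes it below -/
import Mathlib

section
/- Let s ∈ (1/2, 1) and h > 0, and let S = (0,h) × (0,h). There exists a constant C depending only on s such that for every measurable u : ℝ² → ℝ with u ∈ L²(S) and |u|_{s,S} < ∞, one has ∫_0^h ∫_0^h ∫_0^h (u(x, a) − u(x, b))² / |a − b|^{2s} da db dx ≤ C h |u|_{s,S}². -/
set_option maxHeartbeats 1000000

open MeasureTheory Set
open scoped ENNReal

/-- Euclidean distance on `ℝ × ℝ`. -/
noncomputable def euclDist (x y : ℝ × ℝ) : ℝ :=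
  Real.sqrt ((x.1 - y.1) ^ 2 + (x.2 - y.2) ^ 2)

/-- The squared Gagliardo seminorm `|v|_{s,D}²` of order `s` on `D ⊆ ℝ²`. -/
noncomputable def gagliardoSq (s : ℝ) (D : Set (ℝ × ℝ)) (v : ℝ × ℝ → ℝ) : ℝ≥0∞ :=
  ∫⁻ x in D, ∫⁻ y in D, ENNReal.ofReal ((v x - v y) ^ 2 / euclDist x y ^ (2 * (1 + s)))

lemma euclDist_nonneg (x y : ℝ × ℝ) : 0 ≤ euclDist x y := Real.sqrt_nonneg _

lemma euclDist_eq_zero {x y : ℝ × ℝ} (h : euclDist x y = 0) : x = y := by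
  unfold euclDist at h
  have h2 : (x.1 - y.1) ^ 2 + (x.2 - y.2) ^ 2 ≤ 0 := Real.sqrt_eq_zero'.mp h
  have e1 : x.1 = y.1 := by nlinarith [sq_nonneg (x.1 - y.1), sq_nonneg (x.2 - y.2)]
  have e2 : x.2 = y.2 := by nlinarith [sq_nonneg (x.1 - y.1), sq_nonneg (x.2 - y.2)]
  exact Prod.ext e1 e2

lemma aux_div_le {s Q D d : ℝ} (hs0 : 0 < s) (hs2 : s ≤ 1) (hd : 0 < d) (hD : 0 ≤ D)
    (hDd : D ^ 2 ≤ 5 * d ^ 2) (hQ : D = 0 → Q = 0) :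
    Q ^ 2 / d ^ (2 * (1 + s)) ≤ 25 * (Q ^ 2 / D ^ (2 * (1 + s))) := by
  rcases eq_or_lt_of_le hD with h0 | hDpos
  · have hq : Q = 0 := hQ h0.symm
    simp [hq]
  · have h1 : D ^ (2 * (1 + s)) = (D ^ 2) ^ (1 + s) := by
      rw [← Real.rpow_natCast D 2, ← Real.rpow_mul hD]
      norm_num
    have h2 : (D ^ 2) ^ (1 + s) ≤ (5 * d ^ 2) ^ (1 + s) :=
      Real.rpow_le_rpow (sq_nonneg D) hDd (by linarith)
    have h3 : (5 * d ^ 2) ^ (1 + s) = (5 : ℝ) ^ (1 + s) * (d ^ 2) ^ (1 + s) :=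
      Real.mul_rpow (by norm_num) (sq_nonneg d)
    have h4 : (5 : ℝ) ^ (1 + s) ≤ (5 : ℝ) ^ (2 : ℝ) :=
      Real.rpow_le_rpow_of_exponent_le (by norm_num) (by linarith)
    have h5 : (5 : ℝ) ^ (2 : ℝ) = 25 := by
      rw [show (2 : ℝ) = ((2 : ℕ) : ℝ) by norm_num, Real.rpow_natCast]; norm_num
    have h6 : (d ^ 2) ^ (1 + s) = d ^ (2 * (1 + s)) := by
      rw [← Real.rpow_natCast d 2, ← Real.rpow_mul hd.le]
      norm_num
    have hd2 : 0 ≤ (d ^ 2) ^ (1 + s) := Real.rpow_nonneg (sq_nonneg d) _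
    have hDe : D ^ (2 * (1 + s)) ≤ 25 * d ^ (2 * (1 + s)) := by
      calc D ^ (2 * (1 + s)) = (D ^ 2) ^ (1 + s) := h1
        _ ≤ (5 * d ^ 2) ^ (1 + s) := h2
        _ = (5 : ℝ) ^ (1 + s) * (d ^ 2) ^ (1 + s) := h3
        _ ≤ 25 * (d ^ 2) ^ (1 + s) := by nlinarith
        _ = 25 * d ^ (2 * (1 + s)) := by rw [h6]
    have hdp : (0 : ℝ) < d ^ (2 * (1 + s)) := Real.rpow_pos_of_pos hd _
    have hDp : (0 : ℝ) < D ^ (2 * (1 + s)) := Real.rpow_pos_of_pos hDpos _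
    rw [mul_div_assoc' 25 (Q ^ 2) _, div_le_div_iff₀ hdp hDp]
    nlinarith [sq_nonneg Q]

lemma key_real (s : ℝ) (hs1 : 1 / 2 < s) (hs2 : s < 1) (u : ℝ × ℝ → ℝ)
    {x a b y c d : ℝ} (hd : d = |a - b|) (hd0 : 0 < d)
    (hxy : |x - y| ≤ d) (hcb : |c - b| ≤ d) :
    (u (x, a) - u (x, b)) ^ 2 / |a - b| ^ (2 * s) ≤
      50 * d ^ 2 * ((u (x, a) - u (y, c)) ^ 2 / euclDist (x, a) (y, c) ^ (2 * (1 + s))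
        + (u (x, b) - u (y, c)) ^ 2 / euclDist (x, b) (y, c) ^ (2 * (1 + s))) := by
  have hs0 : 0 < s := by linarith
  set Q1 := u (x, a) - u (y, c) with hQ1
  set Q2 := u (x, b) - u (y, c) with hQ2
  set D1 := euclDist (x, a) (y, c) with hD1
  set D2 := euclDist (x, b) (y, c) with hD2
  have hD1nn : 0 ≤ D1 := Real.sqrt_nonneg _
  have hD2nn : 0 ≤ D2 := Real.sqrt_nonneg _
  have hD1e : D1 ^ 2 = (x - y) ^ 2 + (a - c) ^ 2 := by
    rw [hD1]; exact Real.sq_sqrt (by positivity)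
  have hD2e : D2 ^ 2 = (x - y) ^ 2 + (b - c) ^ 2 := by
    rw [hD2]; exact Real.sq_sqrt (by positivity)
  have hac : |a - c| ≤ 2 * d := by
    have := abs_sub_le a b c
    have hbc : |b - c| = |c - b| := abs_sub_comm b c
    rw [← hd] at this
    linarith [this, hbc ▸ hcb]
  have hxy2 : (x - y) ^ 2 ≤ d ^ 2 := by nlinarith [sq_abs (x - y), abs_nonneg (x - y)]
  have hac2 : (a - c) ^ 2 ≤ 4 * d ^ 2 := by nlinarith [sq_abs (a - c), abs_nonneg (a - c)]
  have hbc2 : (b - c) ^ 2 ≤ d ^ 2 := by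
    have : |b - c| = |c - b| := abs_sub_comm b c
    nlinarith [sq_abs (b - c), abs_nonneg (b - c), this ▸ hcb]
  have hD1sq : D1 ^ 2 ≤ 5 * d ^ 2 := by rw [hD1e]; linarith
  have hD2sq : D2 ^ 2 ≤ 5 * d ^ 2 := by rw [hD2e]; nlinarith [sq_nonneg d]
  have hz1 : D1 = 0 → Q1 = 0 := by
    intro h0
    have := euclDist_eq_zero (hD1 ▸ h0)
    rw [hQ1, this, sub_self]
  have hz2 : D2 = 0 → Q2 = 0 := by
    intro h0
    have := euclDist_eq_zero (hD2 ▸ h0)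
    rw [hQ2, this, sub_self]
  have h1 := aux_div_le hs0 hs2.le hd0 hD1nn hD1sq hz1
  have h2 := aux_div_le hs0 hs2.le hd0 hD2nn hD2sq hz2
  have hP : (u (x, a) - u (x, b)) ^ 2 ≤ 2 * Q1 ^ 2 + 2 * Q2 ^ 2 := by
    have : u (x, a) - u (x, b) = Q1 - Q2 := by rw [hQ1, hQ2]; ring
    rw [this]; nlinarith [sq_nonneg (Q1 + Q2)]
  have e2 : d ^ (2 * (1 + s)) = d ^ (2 * s) * d ^ 2 := by
    rw [show 2 * (1 + s) = 2 * s + 2 by ring, Real.rpow_add hd0,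
      show (2 : ℝ) = ((2 : ℕ) : ℝ) by norm_num, Real.rpow_natCast]
  have hpos : (0 : ℝ) < d ^ (2 * (1 + s)) := Real.rpow_pos_of_pos hd0 _
  have hpos' : (0 : ℝ) < d ^ (2 * s) := Real.rpow_pos_of_pos hd0 _
  calc (u (x, a) - u (x, b)) ^ 2 / |a - b| ^ (2 * s)
      = d ^ 2 * ((u (x, a) - u (x, b)) ^ 2 / d ^ (2 * (1 + s))) := by
        rw [← hd, e2]; field_simp
    _ ≤ d ^ 2 * ((2 * Q1 ^ 2 + 2 * Q2 ^ 2) / d ^ (2 * (1 + s))) := by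
        gcongr
    _ = 2 * d ^ 2 * (Q1 ^ 2 / d ^ (2 * (1 + s))) + 2 * d ^ 2 * (Q2 ^ 2 / d ^ (2 * (1 + s))) := by
        ring
    _ ≤ 2 * d ^ 2 * (25 * (Q1 ^ 2 / D1 ^ (2 * (1 + s))))
        + 2 * d ^ 2 * (25 * (Q2 ^ 2 / D2 ^ (2 * (1 + s)))) := by
        have h2d : (0:ℝ) ≤ 2 * d ^ 2 := by positivity
        exact add_le_add (mul_le_mul_of_nonneg_left h1 h2d) (mul_le_mul_of_nonneg_left h2 h2d)
    _ = 50 * d ^ 2 * (Q1 ^ 2 / D1 ^ (2 * (1 + s)) + Q2 ^ 2 / D2 ^ (2 * (1 + s))) := by ring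

lemma aux_vol {h x d : ℝ} (hx : x ∈ Ioo (0:ℝ) h) (hd0 : 0 < d) (hdh : d ≤ h) :
    ENNReal.ofReal d ≤ volume (Ioo (0:ℝ) h ∩ Ioo (x - d) (x + d)) := by
  rw [Set.Ioo_inter_Ioo, Real.volume_Ioo]
  apply ENNReal.ofReal_le_ofReal
  obtain ⟨hx1, hx2⟩ := hx
  rcases le_total 0 (x - d) with h1 | h1
  · rw [max_eq_right h1]
    have : x ≤ min h (x + d) := le_min hx2.le (by linarith)
    linarith
  · rw [max_eq_left h1]
    have : d ≤ min h (x + d) := le_min hdh (by linarith)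
    linarith

/-- Fractional slicing (Fubini-type trace) inequality: for `s ∈ (1/2,1)`, `h > 0`
and `S = (0,h)²`, there is `C = C(s)` such that for every measurable `u ∈ L²(S)`
with finite Gagliardo seminorm,
`∫_0^h ∫_0^h ∫_0^h (u(x,a) − u(x,b))²/|a−b|^{2s} da db dx ≤ C h |u|_{s,S}²`. -/
theorem fractional_slicing_inequality (s : ℝ) (hs : s ∈ Set.Ioo (1/2 : ℝ) 1) :
    ∃ C : ℝ, 0 < C ∧ ∀ h : ℝ, 0 < h →
      ∀ u : ℝ × ℝ → ℝ, Measurable u →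
        MemLp u 2 (volume.restrict (Ioo (0 : ℝ) h ×ˢ Ioo (0 : ℝ) h)) →
        gagliardoSq s (Ioo (0 : ℝ) h ×ˢ Ioo (0 : ℝ) h) u < ⊤ →
        (∫⁻ x in Ioo (0 : ℝ) h, ∫⁻ a in Ioo (0 : ℝ) h, ∫⁻ b in Ioo (0 : ℝ) h,
            ENNReal.ofReal ((u (x, a) - u (x, b)) ^ 2 / |a - b| ^ (2 * s))) ≤
          ENNReal.ofReal (C * h) *
            gagliardoSq s (Ioo (0 : ℝ) h ×ˢ Ioo (0 : ℝ) h) u := by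
  obtain ⟨hs1, hs2⟩ := hs
  refine ⟨100, by norm_num, ?_⟩
  intro h hh u hu _hmem _hfin
  set I : Set ℝ := Set.Ioo (0:ℝ) h with hI
  have hIm : MeasurableSet I := measurableSet_Ioo
  have hvolI : volume I = ENNReal.ofReal h := by rw [hI, Real.volume_Ioo, sub_zero]
  set μ : Measure ℝ := volume.restrict I with hμ
  set k : ℝ × ℝ → ℝ × ℝ → ℝ≥0∞ :=
    fun p q => ENNReal.ofReal ((u p - u q) ^ 2 / euclDist p q ^ (2 * (1 + s))) with hkdef
  -- measurability of the kernel
  have hdc : Continuous fun z : (ℝ × ℝ) × (ℝ × ℝ) => euclDist z.1 z.2 := by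
    apply Real.continuous_sqrt.comp
    fun_prop
  have hkm : Measurable (Function.uncurry k) := by
    apply Measurable.ennreal_ofReal
    exact (((hu.comp measurable_fst).sub (hu.comp measurable_snd)).pow_const 2).div
      (hdc.measurable.pow measurable_const)
  have hkm2 : ∀ p, Measurable (k p) := fun p => hkm.comp measurable_prodMk_left
  set T : ℝ × ℝ → ℝ≥0∞ := fun p => ∫⁻ y in I, ∫⁻ c in I, k p (y, c) with hTdef
  have hTprod : ∀ p, T p = ∫⁻ q, k p q ∂(μ.prod μ) :=
    fun p => (lintegral_prod _ (hkm2 p).aemeasurable).symm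
  have hTm : Measurable T := by
    have hE : T = fun p => ∫⁻ q, k p q ∂(μ.prod μ) := funext fun p => hTprod p
    rw [hE]
    exact Measurable.lintegral_prod_right hkm
  have hsplit2 : ∀ p₁ p₂ : ℝ × ℝ,
      (∫⁻ y in I, ∫⁻ c in I, (k p₁ (y, c) + k p₂ (y, c))) = T p₁ + T p₂ := by
    intro p₁ p₂
    have hm : AEMeasurable (fun q => k p₁ q + k p₂ q) (μ.prod μ) :=
      ((hkm2 p₁).add (hkm2 p₂)).aemeasurable
    calc (∫⁻ y in I, ∫⁻ c in I, (k p₁ (y, c) + k p₂ (y, c)))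
        = ∫⁻ q, (k p₁ q + k p₂ q) ∂(μ.prod μ) := (lintegral_prod _ hm).symm
      _ = (∫⁻ q, k p₁ q ∂(μ.prod μ)) + ∫⁻ q, k p₂ q ∂(μ.prod μ) :=
          lintegral_add_left (hkm2 p₁) _
      _ = T p₁ + T p₂ := by rw [hTprod, hTprod]
  -- Step A : pointwise bound
  have stepA : ∀ x ∈ I, ∀ a ∈ I, ∀ b ∈ I,
      ENNReal.ofReal ((u (x, a) - u (x, b)) ^ 2 / |a - b| ^ (2 * s)) ≤
        50 * (T (x, a) + T (x, b)) := by
    intro x hx a ha b hb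
    by_cases hab : a = b
    · simp [hab]
    · set d := |a - b| with hd
      have hd0 : 0 < d := abs_pos.mpr (sub_ne_zero.mpr hab)
      have hdh : d ≤ h := by
        have : |a - b| < h := abs_sub_lt_iff.mpr ⟨by linarith [ha.1, ha.2, hb.1, hb.2],
          by linarith [ha.1, ha.2, hb.1, hb.2]⟩
        rw [hd]; exact this.le
      set J : Set ℝ := I ∩ Set.Ioo (x - d) (x + d) with hJ
      set J' : Set ℝ := I ∩ Set.Ioo (b - d) (b + d) with hJ'
      have hJm : MeasurableSet J := hIm.inter measurableSet_Ioo
      have hJ'm : MeasurableSet J' := hIm.inter measurableSet_Ioo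
      have hvJ : ENNReal.ofReal d ≤ volume J := aux_vol hx hd0 hdh
      have hvJ' : ENNReal.ofReal d ≤ volume J' := aux_vol hb hd0 hdh
      set c₀ : ℝ≥0∞ := ENNReal.ofReal ((u (x, a) - u (x, b)) ^ 2 / |a - b| ^ (2 * s)) with hc₀
      have key : ∀ y ∈ J, ∀ cc ∈ J',
          c₀ ≤ ENNReal.ofReal (50 * d ^ 2) * (k (x, a) (y, cc) + k (x, b) (y, cc)) := by
        intro y hy cc hcc
        have hxy : |x - y| ≤ d := by
          have h1 := hy.2.1; have h2 := hy.2.2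
          rw [abs_le]; constructor <;> [linarith; linarith]
        have hcb : |cc - b| ≤ d := by
          have h1 := hcc.2.1; have h2 := hcc.2.2
          rw [abs_le]; constructor <;> [linarith; linarith]
        have hreal := key_real s hs1 hs2 u hd hd0 hxy hcb
        calc c₀ ≤ ENNReal.ofReal (50 * d ^ 2 *
            ((u (x, a) - u (y, cc)) ^ 2 / euclDist (x, a) (y, cc) ^ (2 * (1 + s))
              + (u (x, b) - u (y, cc)) ^ 2 / euclDist (x, b) (y, cc) ^ (2 * (1 + s)))) :=
            ENNReal.ofReal_le_ofReal hreal
          _ = ENNReal.ofReal (50 * d ^ 2) * (k (x, a) (y, cc) + k (x, b) (y, cc)) := by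
            rw [ENNReal.ofReal_mul (by positivity)]
            congr 1
            rw [ENNReal.ofReal_add (div_nonneg (sq_nonneg _) (Real.rpow_nonneg (euclDist_nonneg _ _) _))
              (div_nonneg (sq_nonneg _) (Real.rpow_nonneg (euclDist_nonneg _ _) _))]
      have big : c₀ * (ENNReal.ofReal d * ENNReal.ofReal d) ≤
          ENNReal.ofReal (50 * d ^ 2) * (T (x, a) + T (x, b)) := by
        calc c₀ * (ENNReal.ofReal d * ENNReal.ofReal d)
            ≤ c₀ * (volume J * volume J') := mul_le_mul_right (mul_le_mul' hvJ hvJ') c₀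
          _ = ∫⁻ _ in J, ∫⁻ _ in J', c₀ := by
              simp only [setLIntegral_const]
              ring
          _ ≤ ∫⁻ y in J, ∫⁻ cc in J',
                ENNReal.ofReal (50 * d ^ 2) * (k (x, a) (y, cc) + k (x, b) (y, cc)) := by
              refine setLIntegral_mono' hJm fun y hy => ?_
              refine setLIntegral_mono' hJ'm fun cc hcc => ?_
              exact key y hy cc hcc
          _ ≤ ∫⁻ y in I, ∫⁻ cc in I,
                ENNReal.ofReal (50 * d ^ 2) * (k (x, a) (y, cc) + k (x, b) (y, cc)) := by
              refine le_trans (lintegral_mono fun y => ?_) (lintegral_mono_set inter_subset_left)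
              exact lintegral_mono_set inter_subset_left
          _ = ENNReal.ofReal (50 * d ^ 2) *
                ∫⁻ y in I, ∫⁻ cc in I, (k (x, a) (y, cc) + k (x, b) (y, cc)) := by
              rw [← lintegral_const_mul' _ _ ENNReal.ofReal_ne_top]
              exact lintegral_congr fun y =>
                lintegral_const_mul' _ _ ENNReal.ofReal_ne_top
          _ = ENNReal.ofReal (50 * d ^ 2) * (T (x, a) + T (x, b)) := by rw [hsplit2]
      have hX0 : ENNReal.ofReal d * ENNReal.ofReal d ≠ 0 := by
        have : (0:ℝ≥0∞) < ENNReal.ofReal d := ENNReal.ofReal_pos.mpr hd0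
        exact (ENNReal.mul_pos this.ne' this.ne').ne'
      have hXt : ENNReal.ofReal d * ENNReal.ofReal d ≠ ⊤ :=
        ENNReal.mul_ne_top ENNReal.ofReal_ne_top ENNReal.ofReal_ne_top
      have hfifty : ENNReal.ofReal (50 * d ^ 2) =
          50 * (ENNReal.ofReal d * ENNReal.ofReal d) := by
        rw [show (50:ℝ) * d ^ 2 = 50 * (d * d) by ring, ENNReal.ofReal_mul (by norm_num),
          ENNReal.ofReal_mul hd0.le]
        norm_num
      rw [hfifty] at big
      have big2 : c₀ * (ENNReal.ofReal d * ENNReal.ofReal d) ≤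
          (50 * (T (x, a) + T (x, b))) * (ENNReal.ofReal d * ENNReal.ofReal d) := by
        calc c₀ * (ENNReal.ofReal d * ENNReal.ofReal d)
            ≤ 50 * (ENNReal.ofReal d * ENNReal.ofReal d) * (T (x, a) + T (x, b)) := big
          _ = (50 * (T (x, a) + T (x, b))) * (ENNReal.ofReal d * ENNReal.ofReal d) := by ring
      exact (ENNReal.mul_le_mul_iff_left hX0 hXt).mp big2
  -- Step B : integrate
  have fifty_ne : (50 : ℝ≥0∞) ≠ ⊤ := by norm_num
  calc (∫⁻ x in I, ∫⁻ a in I, ∫⁻ b in I,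
        ENNReal.ofReal ((u (x, a) - u (x, b)) ^ 2 / |a - b| ^ (2 * s)))
      ≤ ∫⁻ x in I, ∫⁻ a in I, ∫⁻ b in I, 50 * (T (x, a) + T (x, b)) := by
        refine setLIntegral_mono' hIm fun x hx => ?_
        refine setLIntegral_mono' hIm fun a ha => ?_
        refine setLIntegral_mono' hIm fun b hb => ?_
        exact stepA x hx a ha b hb
    _ = ∫⁻ x in I, ∫⁻ a in I, 50 * (T (x, a) * ENNReal.ofReal h + ∫⁻ b in I, T (x, b)) := by
        refine lintegral_congr fun x => lintegral_congr fun a => ?_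
        rw [lintegral_const_mul' _ _ fifty_ne]
        congr 1
        rw [lintegral_add_left measurable_const, setLIntegral_const, hvolI]
    _ = ∫⁻ x in I, 50 * ((∫⁻ a in I, T (x, a)) * ENNReal.ofReal h
          + (∫⁻ b in I, T (x, b)) * ENNReal.ofReal h) := by
        refine lintegral_congr fun x => ?_
        rw [lintegral_const_mul' _ _ fifty_ne]
        congr 1
        rw [lintegral_add_right _ measurable_const,
          lintegral_mul_const' _ _ ENNReal.ofReal_ne_top, setLIntegral_const, hvolI]
    _ = (100 * ENNReal.ofReal h) * ∫⁻ x in I, ∫⁻ a in I, T (x, a) := by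
        have hpt : ∀ x, 50 * ((∫⁻ a in I, T (x, a)) * ENNReal.ofReal h
            + (∫⁻ b in I, T (x, b)) * ENNReal.ofReal h)
            = (100 * ENNReal.ofReal h) * ∫⁻ a in I, T (x, a) := fun x => by ring
        rw [lintegral_congr hpt]
        exact lintegral_const_mul' _ _
          (ENNReal.mul_ne_top (by norm_num) ENNReal.ofReal_ne_top)
    _ = ENNReal.ofReal (100 * h) * gagliardoSq s (I ×ˢ I) u := by
        congr 1
        · rw [ENNReal.ofReal_mul (by norm_num)]
          norm_num
        · -- iterated integral equals the Gagliardo seminorm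
          have hres : volume.restrict (I ×ˢ I) = μ.prod μ := by
            rw [hμ, Measure.prod_restrict, ← Measure.volume_eq_prod]
          have h1 : ∀ p, (∫⁻ q in I ×ˢ I, k p q) = T p := by
            intro p
            rw [show (∫⁻ q in I ×ˢ I, k p q) = ∫⁻ q, k p q ∂(volume.restrict (I ×ˢ I)) from rfl,
              hres]
            exact (hTprod p).symm
          calc (∫⁻ x in I, ∫⁻ a in I, T (x, a))
              = ∫⁻ p, T p ∂(μ.prod μ) := (lintegral_prod T hTm.aemeasurable).symm
            _ = ∫⁻ p in I ×ˢ I, T p := by rw [hres]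
            _ = ∫⁻ p in I ×ˢ I, ∫⁻ q in I ×ˢ I, k p q :=
                lintegral_congr fun p => (h1 p).symm
            _ = gagliardoSq s (I ×ˢ I) u := rfl
end

section
/- Let κ₀ ∈ ℝ and κ₁ > 0, let θ ∈ (1/2, 1), let h > 0 and let l satisfy τ(θ) h ≤ l ≤ h. Let S = (0,h) × (0,h), and let K ⊆ (0,h) × (0,l) be a measurable set with |K| ≥ h l / c for some c ≥ 1. Then there exists a constant C depending only on θ and c such that for every measurable u : ℝ² → ℝ with u ∈ L²(S) and |u|_{θ,S} < ∞, one has ∫_S (u(x) − ū_K)² dx ≤ C (1 + ϱ(κ₀,κ₁)²) h^{2θ} |u|_{θ,S}², where ū_K is the mean value of u over K. -/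
set_option maxHeartbeats 2000000

open MeasureTheory Set
open scoped ENNReal

/-- The mean value of `v` over `D`. -/
noncomputable def meanValue (D : Set (ℝ × ℝ)) (v : ℝ × ℝ → ℝ) : ℝ :=
  (∫ x in D, v x) / (volume D).toReal

/-- `r(θ) = 1 − κ₁(θ − 1/2)(θ − 1)`. -/
noncomputable def rfun (κ₁ θ : ℝ) : ℝ := 1 - κ₁ * (θ - 1/2) * (θ - 1)

/-- `τ(θ) = exp(1 + κ₀ − r(θ)/(2(1 − θ)))`. -/
noncomputable def tau (κ₀ κ₁ θ : ℝ) : ℝ :=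
  Real.exp (1 + κ₀ - rfun κ₁ θ / (2 * (1 - θ)))

/-- The constant `ϱ(κ₀,κ₁)` from formula (5.3) of the paper. -/
noncomputable def varrho (κ₀ κ₁ : ℝ) : ℝ :=
  if (κ₀ + 1) / κ₁ > 1/4 then Real.exp (1/2)
  else if (κ₀ + 1) / κ₁ < -(1/4) then Real.exp (-κ₀ / 2)
  else Real.exp ((16 * κ₀ ^ 2 - 8 * κ₀ * (κ₁ - 4) + (4 + κ₁) ^ 2) / (32 * κ₁))

/- ### Auxiliary lemmas -/

lemma my_geom_le {ρ : ℝ} (h0 : 0 ≤ ρ) (h1 : ρ < 1) (M : ℕ) :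
    ∑ k ∈ Finset.range M, ρ ^ k ≤ (1 - ρ)⁻¹ := by
  rw [geom_sum_eq h1.ne]
  rw [show (ρ ^ M - 1) / (ρ - 1) = (1 - ρ ^ M) / (1 - ρ) by
    rw [← neg_div_neg_eq]; ring_nf]
  rw [div_le_iff₀ (by linarith : (0:ℝ) < 1 - ρ)]
  have h2 : (1 - ρ)⁻¹ * (1 - ρ) = 1 := inv_mul_cancel₀ (by linarith)
  have := pow_nonneg h0 M
  nlinarith

lemma euclDist_pos {x y : ℝ × ℝ} (h : y ≠ x) : 0 < euclDist x y := by
  unfold euclDist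
  apply Real.sqrt_pos.2
  rcases eq_or_ne x.1 y.1 with h1 | h1
  · have h2 : x.2 ≠ y.2 := by
      intro h2; exact h (Prod.ext h1.symm h2.symm)
    have hne : x.2 - y.2 ≠ 0 := sub_ne_zero.2 h2
    have : (x.2 - y.2) ^ 2 > 0 := by positivity
    nlinarith [sq_nonneg (x.1 - y.1)]
  · have : (x.1 - y.1) ^ 2 > 0 := by
      have : x.1 - y.1 ≠ 0 := sub_ne_zero.2 h1
      positivity
    nlinarith [sq_nonneg (x.2 - y.2)]

lemma volume_singleton2 (x : ℝ × ℝ) : volume ({x} : Set (ℝ × ℝ)) = 0 := by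
  have : ({x} : Set (ℝ × ℝ)) = {x.1} ×ˢ {x.2} := by
    rw [Set.singleton_prod_singleton]
  rw [this, Measure.volume_eq_prod, Measure.prod_prod, Real.volume_singleton,
    Real.volume_singleton, mul_zero]

lemma volume_boxIoo (a b c d : ℝ) :
    volume (Ioo a b ×ˢ Ioo c d) = ENNReal.ofReal (b - a) * ENNReal.ofReal (d - c) := by
  rw [Measure.volume_eq_prod, Measure.prod_prod, Real.volume_Ioo, Real.volume_Ioo]

lemma euclDist_box_le {a b c d p q : ℝ} (hp : b - a ≤ p) (hq : d - c ≤ q)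
    {y z : ℝ × ℝ} (hy : y ∈ Ioo a b ×ˢ Ioo c d) (hz : z ∈ Ioo a b ×ˢ Ioo c d) :
    euclDist y z ≤ Real.sqrt (p ^ 2 + q ^ 2) := by
  obtain ⟨⟨hy1, hy2⟩, ⟨hy3, hy4⟩⟩ := hy
  obtain ⟨⟨hz1, hz2⟩, ⟨hz3, hz4⟩⟩ := hz
  apply Real.sqrt_le_sqrt
  have h1 : (y.1 - z.1) ^ 2 ≤ p ^ 2 := sq_le_sq' (by linarith) (by linarith)
  have h2 : (y.2 - z.2) ^ 2 ≤ q ^ 2 := sq_le_sq' (by linarith) (by linarith)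
  linarith

lemma stepA {u : ℝ × ℝ → ℝ} {S B : Set (ℝ × ℝ)} (hBS : B ⊆ S)
    (hu : MemLp u 2 (volume.restrict S)) (h0 : volume B ≠ 0) (hfin : volume B ≠ ⊤)
    (v : ℝ) :
    ENNReal.ofReal ((v - meanValue B u) ^ 2)
      ≤ (volume B)⁻¹ * ∫⁻ y in B, ENNReal.ofReal ((v - u y) ^ 2) := by
  set b : ℝ := (volume B).toReal with hb
  have hb0 : 0 < b := ENNReal.toReal_pos h0 hfin
  haveI : IsFiniteMeasure (volume.restrict B) :=
    ⟨by rw [Measure.restrict_apply_univ]; exact lt_top_iff_ne_top.2 hfin⟩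
  have huB : MemLp u 2 (volume.restrict B) :=
    hu.mono_measure (Measure.restrict_mono hBS le_rfl)
  have hf2 : MemLp (fun y => v - u y) 2 (volume.restrict B) := by
    simpa [Pi.sub_def] using (memLp_const (p := 2) (μ := volume.restrict B) v).sub huB
  have hfi : Integrable (fun y => v - u y) (volume.restrict B) := hf2.integrable one_le_two
  have hfsq : Integrable (fun y => (v - u y) ^ 2) (volume.restrict B) := hf2.integrable_sq
  have hui : Integrable u (volume.restrict B) := huB.integrable one_le_two
  set I : ℝ := ∫ y in B, (v - u y) with hI
  set J : ℝ := ∫ y in B, (v - u y) ^ 2 with hJ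
  have hJ0 : 0 ≤ J := integral_nonneg fun y => sq_nonneg _
  have key : I ^ 2 ≤ b * J := by
    set a : ℝ := I / b with ha
    have expand : ∫ y in B, ((v - u y) - a) ^ 2 = J - 2 * a * I + a ^ 2 * b := by
      have e1 : ∀ y : ℝ × ℝ, ((v - u y) - a) ^ 2
          = (v - u y) ^ 2 - (2 * a) * (v - u y) + a ^ 2 := fun y => by ring
      rw [integral_congr_ae (Filter.Eventually.of_forall e1)]
      have hmul : Integrable (fun y => 2 * a * (v - u y)) (volume.restrict B) :=
        hfi.const_mul (2 * a)
      have hsub : Integrable (fun y => (v - u y) ^ 2 - 2 * a * (v - u y))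
          (volume.restrict B) := by
        simpa [Pi.sub_def] using hfsq.sub hmul
      rw [integral_add hsub (integrable_const _)]
      rw [integral_sub hfsq hmul, integral_const_mul]
      rw [setIntegral_const]
      simp only [smul_eq_mul, Measure.restrict_apply_univ, measureReal_def]
      rw [← hI, ← hJ, ← hb]
      ring
    have pos : 0 ≤ ∫ y in B, ((v - u y) - a) ^ 2 := integral_nonneg fun y => sq_nonneg _
    rw [expand] at pos
    have hab : a * b = I := div_mul_cancel₀ I hb0.ne'
    nlinarith [sq_nonneg (I - a * b)]
  have hmean : v - meanValue B u = I / b := by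
    have : I = v * b - ∫ y in B, u y := by
      rw [hI, integral_sub (integrable_const v) hui, setIntegral_const]
      simp only [smul_eq_mul, Measure.restrict_apply_univ, measureReal_def]
      ring
    unfold meanValue
    rw [← hb, this]
    field_simp
  have hreal : (v - meanValue B u) ^ 2 ≤ b⁻¹ * J := by
    rw [hmean, div_pow]
    rw [div_le_iff₀ (by positivity : (0:ℝ) < b ^ 2)]
    calc I ^ 2 ≤ b * J := key
      _ = b⁻¹ * J * b ^ 2 := by field_simp
  calc ENNReal.ofReal ((v - meanValue B u) ^ 2)
      ≤ ENNReal.ofReal (b⁻¹ * J) := ENNReal.ofReal_le_ofReal hreal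
    _ = ENNReal.ofReal b⁻¹ * ENNReal.ofReal J := ENNReal.ofReal_mul (by positivity)
    _ = (volume B)⁻¹ * ∫⁻ y in B, ENNReal.ofReal ((v - u y) ^ 2) := by
        rw [ENNReal.ofReal_inv_of_pos hb0, hb, ENNReal.ofReal_toReal hfin]
        rw [ofReal_integral_eq_lintegral_ofReal hfsq
          (Filter.Eventually.of_forall fun y => sq_nonneg _)]

lemma stepB {u : ℝ × ℝ → ℝ} (hum : Measurable u) {e : ℝ} (he : 0 ≤ e)
    (x : ℝ × ℝ) {B : Set (ℝ × ℝ)} (hB : MeasurableSet B) {D : ℝ} (hD0 : 0 ≤ D)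
    (hD : ∀ y ∈ B, euclDist x y ≤ D) :
    ∫⁻ y in B, ENNReal.ofReal ((u x - u y) ^ 2)
      ≤ ENNReal.ofReal (D ^ e) *
        ∫⁻ y in B, ENNReal.ofReal ((u x - u y) ^ 2 / euclDist x y ^ e) := by
  have hmeas : Measurable (fun y => ENNReal.ofReal ((u x - u y) ^ 2 / euclDist x y ^ e)) := by
    unfold euclDist
    fun_prop
  rw [← lintegral_const_mul _ hmeas]
  apply lintegral_mono_ae
  rw [ae_restrict_iff' hB]
  have hae : ∀ᵐ y : ℝ × ℝ, y ≠ x := by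
    rw [ae_iff]
    have : {y : ℝ × ℝ | ¬ y ≠ x} = {x} := by ext y; simp
    rw [this, volume_singleton2]
  filter_upwards [hae] with y hyx hyB
  have hd0 : 0 < euclDist x y := euclDist_pos hyx
  have hde : 0 < euclDist x y ^ e := Real.rpow_pos_of_pos hd0 e
  have hdD : euclDist x y ^ e ≤ D ^ e := Real.rpow_le_rpow hd0.le (hD y hyB) he
  rw [← ENNReal.ofReal_mul (by positivity)]
  apply ENNReal.ofReal_le_ofReal
  rw [mul_div_assoc']
  rw [le_div_iff₀ hde]
  have h2 : 0 ≤ (u x - u y) ^ 2 := sq_nonneg _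
  nlinarith

lemma tau_pow_le {θ κ₀ κ₁ : ℝ} (hθ1 : 1/2 < θ) (hθ2 : θ < 1) (hκ₁ : 0 < κ₁) :
    ((tau κ₀ κ₁ θ)⁻¹) ^ (2 - 2*θ) ≤ varrho κ₀ κ₁ ^ 2 := by
  have ht0 : 0 < 1 - θ := by linarith
  have hL : ((tau κ₀ κ₁ θ)⁻¹) ^ (2 - 2*θ)
      = Real.exp (rfun κ₁ θ - 2*(1-θ)*(1 + κ₀)) := by
    unfold tau
    rw [← Real.exp_neg, ← Real.exp_mul]
    congr 1
    have hne : (2 * (1 - θ)) ≠ 0 := by positivity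
    field_simp
    ring
  rw [hL]
  have hsq : ∀ z : ℝ, Real.exp z ^ 2 = Real.exp (2*z) := by
    intro z; rw [← Real.exp_nat_mul]; norm_num
  unfold varrho rfun
  split_ifs with h1 h2
  · rw [hsq, Real.exp_le_exp]
    have h1' : 1/4 * κ₁ < κ₀ + 1 := (lt_div_iff₀ hκ₁).1 h1
    nlinarith [mul_pos hκ₁ ht0, mul_nonneg hκ₁.le (sq_nonneg (1 - θ))]
  · rw [hsq, Real.exp_le_exp]
    have h2' : κ₀ + 1 < -(1/4) * κ₁ := (div_lt_iff₀ hκ₁).1 h2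
    nlinarith [mul_pos hκ₁ ht0, mul_nonneg hκ₁.le (sq_nonneg (1 - θ)), sq_nonneg (1 - 2*θ)]
  · rw [hsq, Real.exp_le_exp]
    rw [show (2:ℝ) * ((16 * κ₀ ^ 2 - 8 * κ₀ * (κ₁ - 4) + (4 + κ₁) ^ 2) / (32 * κ₁))
        = (16 * κ₀ ^ 2 - 8 * κ₀ * (κ₁ - 4) + (4 + κ₁) ^ 2) / (16 * κ₁) by
      field_simp; ring]
    rw [le_div_iff₀ (by positivity : (0:ℝ) < 16 * κ₁)]
    nlinarith [sq_nonneg (4*κ₁*(1-θ) - (κ₁ - 4 - 4*κ₀)), hκ₁]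

lemma key_hl {θ κ₀ κ₁ h l : ℝ} (hθ1 : 1/2 < θ) (hθ2 : θ < 1) (hκ₁ : 0 < κ₁)
    (hh : 0 < h) (hl0 : 0 < l) (hτl : tau κ₀ κ₁ θ * h ≤ l) :
    h * h * l ^ (2*θ - 2) ≤ varrho κ₀ κ₁ ^ 2 * h ^ (2*θ) := by
  have hτ : 0 < tau κ₀ κ₁ θ := Real.exp_pos _
  have hhl : h / l ≤ (tau κ₀ κ₁ θ)⁻¹ := by
    rw [div_le_iff₀ hl0]
    calc h = (tau κ₀ κ₁ θ)⁻¹ * (tau κ₀ κ₁ θ * h) := by field_simp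
      _ ≤ (tau κ₀ κ₁ θ)⁻¹ * l := mul_le_mul_of_nonneg_left hτl (by positivity)
  have hkey : (h / l) ^ (2 - 2*θ) ≤ varrho κ₀ κ₁ ^ 2 :=
    le_trans (Real.rpow_le_rpow (by positivity) hhl (by linarith))
      (tau_pow_le hθ1 hθ2 hκ₁)
  have h2 : h ^ (2 - 2*θ) * h ^ (2*θ) = h * h := by
    rw [← Real.rpow_add hh, show (2 - 2*θ) + 2*θ = ((2:ℕ):ℝ) by push_cast; ring,
      Real.rpow_natCast]
    ring
  have hid : h * h * l ^ (2*θ - 2) = (h / l) ^ (2 - 2*θ) * h ^ (2*θ) := by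
    rw [Real.div_rpow hh.le hl0.le,
      show (2*θ - 2 : ℝ) = -(2 - 2*θ) by ring, Real.rpow_neg hl0.le, ← h2]
    ring
  rw [hid]
  exact mul_le_mul_of_nonneg_right hkey (Real.rpow_nonneg hh.le _)

lemma square_poincare {θ h : ℝ} {u : ℝ × ℝ → ℝ} (hθ1 : 1/2 < θ) (hθ2 : θ < 1) (hh : 0 < h)
    (hum : Measurable u)
    (hu2 : MemLp u 2 (volume.restrict (Ioo (0:ℝ) h ×ˢ Ioo (0:ℝ) h))) :
    ∫⁻ x in Ioo (0:ℝ) h ×ˢ Ioo (0:ℝ) h,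
        ENNReal.ofReal ((u x - meanValue (Ioo (0:ℝ) h ×ˢ Ioo (0:ℝ) h) u) ^ 2)
      ≤ ENNReal.ofReal (4 * h ^ (2*θ)) * gagliardoSq θ (Ioo (0:ℝ) h ×ˢ Ioo (0:ℝ) h) u := by
  set S : Set (ℝ × ℝ) := Ioo (0:ℝ) h ×ˢ Ioo (0:ℝ) h with hSdef
  have hSmeas : MeasurableSet S := measurableSet_Ioo.prod measurableSet_Ioo
  have he0 : (0:ℝ) ≤ 2*(1+θ) := by linarith
  have he4 : 2*(1+θ) ≤ (4:ℝ) := by linarith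
  have hvolS : volume S = ENNReal.ofReal (h*h) := by
    rw [hSdef, volume_boxIoo, sub_zero, ← ENNReal.ofReal_mul hh.le]
  have hvol0 : volume S ≠ 0 := by
    rw [hvolS]; exact (ENNReal.ofReal_pos.2 (by positivity)).ne'
  have hvolfin : volume S ≠ ⊤ := by rw [hvolS]; exact ENNReal.ofReal_ne_top
  have hFm : Measurable (Function.uncurry fun x y : ℝ × ℝ =>
      ENNReal.ofReal ((u x - u y) ^ 2 / euclDist x y ^ (2*(1+θ)))) := by
    unfold Function.uncurry euclDist
    fun_prop
  have hΦm : Measurable (fun x => ∫⁻ y in S,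
      ENNReal.ofReal ((u x - u y) ^ 2 / euclDist x y ^ (2*(1+θ)))) :=
    Measurable.lintegral_prod_right hFm
  have hE : (∫⁻ x in S, ∫⁻ y in S,
      ENNReal.ofReal ((u x - u y) ^ 2 / euclDist x y ^ (2*(1+θ)))) = gagliardoSq θ S u := rfl
  -- distance bound on S
  have hdist : ∀ x ∈ S, ∀ y ∈ S, euclDist x y ≤ Real.sqrt 2 * h := by
    intro x hx y hy
    have := euclDist_box_le (p := h) (q := h) (by linarith) (by linarith) hx hy
    calc euclDist x y ≤ Real.sqrt (h^2 + h^2) := this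
      _ = Real.sqrt 2 * h := by
          rw [show h^2 + h^2 = 2*h^2 by ring, Real.sqrt_mul (by norm_num), Real.sqrt_sq hh.le]
  -- constant collapse
  have hconst : (volume S)⁻¹ * ENNReal.ofReal ((Real.sqrt 2 * h) ^ (2*(1+θ)))
      ≤ ENNReal.ofReal (4 * h ^ (2*θ)) := by
    rw [hvolS, ← ENNReal.ofReal_inv_of_pos (by positivity), ← ENNReal.ofReal_mul (by positivity)]
    apply ENNReal.ofReal_le_ofReal
    have hs2 : Real.sqrt 2 ^ (2*(1+θ)) ≤ 4 := by
      calc Real.sqrt 2 ^ (2*(1+θ)) ≤ Real.sqrt 2 ^ (4:ℝ) :=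
            Real.rpow_le_rpow_of_exponent_le (by
              nlinarith [Real.sq_sqrt (by norm_num : (0:ℝ) ≤ 2), Real.sqrt_nonneg 2]) he4
        _ = 4 := by
            rw [show Real.sqrt 2 ^ (4:ℝ) = Real.sqrt 2 ^ (4:ℕ) by
              rw [← Real.rpow_natCast]; norm_num]
            nlinarith [Real.sq_sqrt (by norm_num : (0:ℝ) ≤ 2), Real.sqrt_nonneg 2]
    have hhe : h ^ (2*(1+θ)) = h ^ (2*θ) * (h*h) := by
      rw [show 2*(1+θ) = 2*θ + ((2:ℕ):ℝ) by push_cast; ring, Real.rpow_add hh, Real.rpow_natCast]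
      ring
    rw [Real.mul_rpow (Real.sqrt_nonneg 2) hh.le, hhe]
    rw [show (h*h)⁻¹ * (Real.sqrt 2 ^ (2*(1+θ)) * (h ^ (2*θ) * (h*h)))
        = Real.sqrt 2 ^ (2*(1+θ)) * h ^ (2*θ) * ((h*h) * (h*h)⁻¹) by ring]
    rw [mul_inv_cancel₀ (by positivity : h*h ≠ 0), mul_one]
    have : (0:ℝ) ≤ h ^ (2*θ) := Real.rpow_nonneg hh.le _
    nlinarith
  calc ∫⁻ x in S, ENNReal.ofReal ((u x - meanValue S u) ^ 2)
      ≤ ∫⁻ x in S, ((volume S)⁻¹ * ENNReal.ofReal ((Real.sqrt 2 * h) ^ (2*(1+θ)))) *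
          ∫⁻ y in S, ENNReal.ofReal ((u x - u y) ^ 2 / euclDist x y ^ (2*(1+θ))) := by
        apply setLIntegral_mono ((hΦm.const_mul _))
        intro x hx
        calc ENNReal.ofReal ((u x - meanValue S u) ^ 2)
            ≤ (volume S)⁻¹ * ∫⁻ y in S, ENNReal.ofReal ((u x - u y) ^ 2) :=
              stepA (subset_refl S) hu2 hvol0 hvolfin (u x)
          _ ≤ (volume S)⁻¹ * (ENNReal.ofReal ((Real.sqrt 2 * h) ^ (2*(1+θ))) *
              ∫⁻ y in S, ENNReal.ofReal ((u x - u y) ^ 2 / euclDist x y ^ (2*(1+θ)))) :=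
              mul_le_mul_right (stepB hum he0 x hSmeas (by positivity) (hdist x hx)) _
          _ = _ := by ring
    _ = ((volume S)⁻¹ * ENNReal.ofReal ((Real.sqrt 2 * h) ^ (2*(1+θ)))) * gagliardoSq θ S u := by
        rw [lintegral_const_mul _ hΦm, hE]
    _ ≤ ENNReal.ofReal (4 * h ^ (2*θ)) * gagliardoSq θ S u :=
        mul_le_mul_left hconst _

lemma core_rect {θ h l : ℝ} {u : ℝ × ℝ → ℝ} (hθ1 : 1/2 < θ) (hθ2 : θ < 1)
    (hh : 0 < h) (hl0 : 0 < l) (hlh : l ≤ h) (hum : Measurable u)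
    (hu2 : MemLp u 2 (volume.restrict (Ioo (0:ℝ) h ×ˢ Ioo (0:ℝ) h)))
    (hG : gagliardoSq θ (Ioo (0:ℝ) h ×ˢ Ioo (0:ℝ) h) u < ⊤) :
    ∫⁻ x in Ioo (0:ℝ) h ×ˢ Ioo (0:ℝ) l,
        ENNReal.ofReal ((u x - meanValue (Ioo (0:ℝ) h ×ˢ Ioo (0:ℝ) h) u) ^ 2)
      ≤ ENNReal.ofReal ((50 + 800 * ((1 - (2:ℝ)^(θ-1))⁻¹)^2) * (h * l^(2*θ-1))) *
          gagliardoSq θ (Ioo (0:ℝ) h ×ˢ Ioo (0:ℝ) h) u := by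
  classical
  set S : Set (ℝ × ℝ) := Ioo (0:ℝ) h ×ˢ Ioo (0:ℝ) h with hSdef
  set R : Set (ℝ × ℝ) := Ioo (0:ℝ) h ×ˢ Ioo (0:ℝ) l with hRdef
  have hSmeas : MeasurableSet S := measurableSet_Ioo.prod measurableSet_Ioo
  have hRS : R ⊆ S := Set.prod_mono (subset_refl _) (Ioo_subset_Ioo le_rfl hlh)
  have he0 : (0:ℝ) ≤ 2*(1+θ) := by linarith
  have he4 : 2*(1+θ) ≤ (4:ℝ) := by linarith
  set ρ : ℝ := (2:ℝ)^(θ-1) with hρdef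
  have hρ0 : 0 < ρ := Real.rpow_pos_of_pos two_pos _
  have hρ1 : ρ < 1 := Real.rpow_lt_one_of_one_lt_of_neg one_lt_two (by linarith)
  set W : ℝ := (1 - ρ)⁻¹ with hWdef
  have hW0 : 0 < W := inv_pos.2 (by linarith)
  set E : ℝ≥0∞ := gagliardoSq θ S u with hEdef
  have hEtop : E ≠ ⊤ := hG.ne
  set Er : ℝ := E.toReal with hErdef
  have hEr0 : 0 ≤ Er := ENNReal.toReal_nonneg
  have hFm : Measurable (Function.uncurry fun x y : ℝ × ℝ =>
      ENNReal.ofReal ((u x - u y) ^ 2 / euclDist x y ^ (2*(1+θ)))) := by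
    unfold Function.uncurry euclDist
    fun_prop
  have hΦm : Measurable (fun x => ∫⁻ y in S,
      ENNReal.ofReal ((u x - u y) ^ 2 / euclDist x y ^ (2*(1+θ)))) :=
    Measurable.lintegral_prod_right hFm
  have hE : (∫⁻ x in S, ∫⁻ y in S,
      ENNReal.ofReal ((u x - u y) ^ 2 / euclDist x y ^ (2*(1+θ)))) = E := rfl
  -- dyadic scales
  have hex : ∃ n : ℕ, h ≤ 2 ^ n * l := by
    obtain ⟨n, hn⟩ := pow_unbounded_of_one_lt (h / l) (one_lt_two (α := ℝ))
    exact ⟨n, by rw [← div_le_iff₀ hl0]; exact hn.le⟩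
  set M : ℕ := Nat.find hex with hMdef
  have hM : h ≤ 2 ^ M * l := Nat.find_spec hex
  have hMmin : ∀ k, k < M → (2:ℝ) ^ k * l < h := fun k hk => not_le.mp (Nat.find_min hex hk)
  set s : ℕ → ℝ := fun k => min ((2:ℝ) ^ k * l) h with hsdef
  have hs0 : ∀ k, 0 < s k := fun k => lt_min (by positivity) hh
  have hsh : ∀ k, s k ≤ h := fun k => min_le_right _ _
  have hsmono : ∀ k, s k ≤ s (k+1) := by
    intro k
    apply min_le_min _ le_rfl
    have : (0:ℝ) < 2^k := by positivity
    rw [pow_succ]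
    nlinarith
  have hs2 : ∀ k, s (k+1) ≤ 2 * s k := by
    intro k
    rcases le_total ((2:ℝ)^k * l) h with h'|h'
    · calc s (k+1) ≤ 2^(k+1)*l := min_le_left _ _
        _ = 2*(2^k*l) := by ring
        _ = 2 * s k := by simp only [hsdef]; rw [min_eq_left h']
    · calc s (k+1) ≤ h := min_le_right _ _
        _ ≤ 2*h := by linarith
        _ = 2 * s k := by simp only [hsdef]; rw [min_eq_right h']
  have hs0l : s 0 = l := by
    simp only [hsdef, pow_zero, one_mul]
    exact min_eq_left hlh
  have hsM : s M = h := min_eq_right hM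
  have hsk : ∀ k, k < M → s k = 2^k * l := fun k hk => min_eq_left (hMmin k hk).le
  -- the boxes
  set A : ℝ → ℕ → Set (ℝ × ℝ) := fun x1 k =>
    Ioo (max 0 (x1 - s k)) (min h (x1 + s k)) ×ˢ Ioo 0 (s k) with hAdef
  have hAmeas : ∀ x1 k, MeasurableSet (A x1 k) :=
    fun x1 k => measurableSet_Ioo.prod measurableSet_Ioo
  have hAS : ∀ x1 k, A x1 k ⊆ S := by
    intro x1 k
    simp only [hAdef, hSdef]
    apply Set.prod_mono
    · exact Ioo_subset_Ioo (le_max_left _ _) (min_le_left _ _)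
    · exact Ioo_subset_Ioo le_rfl (hsh k)
  have hAnest : ∀ x1 k, A x1 k ⊆ A x1 (k+1) := by
    intro x1 k
    simp only [hAdef]
    apply Set.prod_mono
    · exact Ioo_subset_Ioo (max_le_max le_rfl (by linarith [hsmono k]))
        (min_le_min le_rfl (by linarith [hsmono k]))
    · exact Ioo_subset_Ioo le_rfl (hsmono k)
  have hwidth : ∀ x1 ∈ Ioo (0:ℝ) h, ∀ k : ℕ,
      s k ≤ min h (x1 + s k) - max 0 (x1 - s k)
        ∧ min h (x1 + s k) - max 0 (x1 - s k) ≤ 2 * s k := by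
    intro x1 hx1 k
    obtain ⟨hx0, hxh⟩ := hx1
    have h1 := hs0 k
    have h2 := hsh k
    constructor
    · rcases le_total (x1 - s k) 0 with h'|h'
      · rw [max_eq_left h']
        rcases le_total h (x1 + s k) with h''|h''
        · rw [min_eq_left h'']; linarith
        · rw [min_eq_right h'']; linarith
      · rw [max_eq_right h']
        rcases le_total h (x1 + s k) with h''|h''
        · rw [min_eq_left h'']; linarith
        · rw [min_eq_right h'']; linarith
    · rcases le_total (x1 - s k) 0 with h'|h'
      · rw [max_eq_left h']
        rcases le_total h (x1 + s k) with h''|h''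
        · rw [min_eq_left h'']; linarith
        · rw [min_eq_right h'']; linarith
      · rw [max_eq_right h']
        rcases le_total h (x1 + s k) with h''|h''
        · rw [min_eq_left h'']; linarith
        · rw [min_eq_right h'']; linarith
  have hAvollow : ∀ x1 ∈ Ioo (0:ℝ) h, ∀ k,
      ENNReal.ofReal (s k * s k) ≤ volume (A x1 k) := by
    intro x1 hx1 k
    simp only [hAdef]
    rw [volume_boxIoo, sub_zero, ENNReal.ofReal_mul (hs0 k).le]
    exact mul_le_mul' (ENNReal.ofReal_le_ofReal (by linarith [(hwidth x1 hx1 k).1])) le_rfl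
  have hAvoltop : ∀ x1 k, volume (A x1 k) ≠ ⊤ := by
    intro x1 k
    simp only [hAdef]
    rw [volume_boxIoo]
    exact ENNReal.mul_ne_top ENNReal.ofReal_ne_top ENNReal.ofReal_ne_top
  have hAvol0 : ∀ x1 ∈ Ioo (0:ℝ) h, ∀ k, volume (A x1 k) ≠ 0 := by
    intro x1 hx1 k
    have := hs0 k
    exact (lt_of_lt_of_le (ENNReal.ofReal_pos.2 (by positivity)) (hAvollow x1 hx1 k)).ne'
  have hxA0 : ∀ x ∈ R, x ∈ A x.1 0 := by
    intro x hx
    obtain ⟨⟨h1, h2⟩, h3, h4⟩ := hx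
    have h5 := hs0 0
    refine ⟨⟨?_, ?_⟩, ?_, ?_⟩
    · exact max_lt h1 (by linarith)
    · exact lt_min h2 (by linarith)
    · exact h3
    · rw [hs0l]; exact h4
  have hAM : ∀ x1 ∈ Ioo (0:ℝ) h, A x1 M = S := by
    intro x1 hx1
    obtain ⟨h1, h2⟩ := hx1
    simp only [hAdef, hSdef, hsM]
    rw [max_eq_left (by linarith), min_eq_left (by linarith)]
  have hdistA : ∀ x1 ∈ Ioo (0:ℝ) h, ∀ k, ∀ y ∈ A x1 k, ∀ z ∈ A x1 k,
      euclDist y z ≤ Real.sqrt 5 * s k := by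
    intro x1 hx1 k y hy z hz
    obtain ⟨_, hw2⟩ := hwidth x1 hx1 k
    have h1 := hs0 k
    calc euclDist y z ≤ Real.sqrt ((2*s k)^2 + (s k)^2) :=
          euclDist_box_le (by linarith) (by linarith) hy hz
      _ = Real.sqrt 5 * s k := by
          rw [show (2*s k)^2 + (s k)^2 = 5 * (s k)^2 by ring, Real.sqrt_mul (by norm_num),
            Real.sqrt_sq h1.le]
  -- mean values
  set m : ℝ → ℕ → ℝ := fun x1 k => meanValue (A x1 k) u with hmdef
  -- pointwise bound : u y vs mean over A x1 k
  have hptwise : ∀ x1 ∈ Ioo (0:ℝ) h, ∀ k, ∀ y ∈ A x1 k,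
      ENNReal.ofReal ((u y - m x1 k) ^ 2)
        ≤ (volume (A x1 k))⁻¹ * (ENNReal.ofReal ((Real.sqrt 5 * s k) ^ (2*(1+θ))) *
            ∫⁻ z in S, ENNReal.ofReal ((u y - u z) ^ 2 / euclDist y z ^ (2*(1+θ)))) := by
    intro x1 hx1 k y hy
    have h5 := hs0 k
    calc ENNReal.ofReal ((u y - m x1 k) ^ 2)
        ≤ (volume (A x1 k))⁻¹ * ∫⁻ z in A x1 k, ENNReal.ofReal ((u y - u z) ^ 2) :=
          stepA (hAS x1 k) hu2 (hAvol0 x1 hx1 k) (hAvoltop x1 k) (u y)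
      _ ≤ (volume (A x1 k))⁻¹ * (ENNReal.ofReal ((Real.sqrt 5 * s k) ^ (2*(1+θ))) *
            ∫⁻ z in A x1 k, ENNReal.ofReal ((u y - u z) ^ 2 / euclDist y z ^ (2*(1+θ)))) :=
          mul_le_mul_right (stepB hum he0 y (hAmeas x1 k) (by positivity)
            (fun z hz => hdistA x1 hx1 k y hy z hz)) _
      _ ≤ _ := by
          apply mul_le_mul_right
          apply mul_le_mul_right
          exact lintegral_mono' (Measure.restrict_mono (hAS x1 k) le_rfl) le_rfl
  -- the mean-difference bound in ENNReal
  have hmm : ∀ x1 ∈ Ioo (0:ℝ) h, ∀ k,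
      ENNReal.ofReal ((m x1 k - m x1 (k+1)) ^ 2)
        ≤ (volume (A x1 k))⁻¹ * ((volume (A x1 (k+1)))⁻¹ *
            (ENNReal.ofReal ((Real.sqrt 5 * s (k+1)) ^ (2*(1+θ))) * E)) := by
    intro x1 hx1 k
    have hsw : (m x1 k - m x1 (k+1)) ^ 2 = (m x1 (k+1) - meanValue (A x1 k) u) ^ 2 := by
      simp only [hmdef]; ring
    rw [hsw]
    calc ENNReal.ofReal ((m x1 (k+1) - meanValue (A x1 k) u) ^ 2)
        ≤ (volume (A x1 k))⁻¹ *
            ∫⁻ y in A x1 k, ENNReal.ofReal ((m x1 (k+1) - u y) ^ 2) :=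
          stepA (hAS x1 k) hu2 (hAvol0 x1 hx1 k) (hAvoltop x1 k) (m x1 (k+1))
      _ ≤ (volume (A x1 k))⁻¹ *
            ∫⁻ y in A x1 k, ((volume (A x1 (k+1)))⁻¹ *
              (ENNReal.ofReal ((Real.sqrt 5 * s (k+1)) ^ (2*(1+θ))) *
                ∫⁻ z in S, ENNReal.ofReal ((u y - u z) ^ 2 / euclDist y z ^ (2*(1+θ))))) := by
          apply mul_le_mul_right
          apply setLIntegral_mono ((hΦm.const_mul _).const_mul _)
          intro y hy
          have hy' : y ∈ A x1 (k+1) := hAnest x1 k hy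
          have hswap : (m x1 (k+1) - u y) ^ 2 = (u y - m x1 (k+1)) ^ 2 := by ring
          rw [hswap]
          exact hptwise x1 hx1 (k+1) y hy'
      _ = (volume (A x1 k))⁻¹ * ((volume (A x1 (k+1)))⁻¹ *
            (ENNReal.ofReal ((Real.sqrt 5 * s (k+1)) ^ (2*(1+θ))) *
              ∫⁻ y in A x1 k,
                ∫⁻ z in S, ENNReal.ofReal ((u y - u z) ^ 2 / euclDist y z ^ (2*(1+θ))))) := by
          rw [lintegral_const_mul _ (hΦm.const_mul _), lintegral_const_mul _ hΦm]
      _ ≤ _ := by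
          apply mul_le_mul_right
          apply mul_le_mul_right
          apply mul_le_mul_right
          rw [← hE]
          exact lintegral_mono' (Measure.restrict_mono (hAS x1 k) le_rfl) le_rfl
  -- real-valued bound for the dyadic mean differences
  have hbk : ∀ x1 ∈ Ioo (0:ℝ) h, ∀ k, k < M →
      (m x1 k - m x1 (k+1))^2 ≤ 400 * ((2:ℝ)^k*l)^(2*θ-2) * Er := by
    intro x1 hx1 k hk
    have hskl : s k = 2^k*l := hsk k hk
    have hsp : 0 < s k := hs0 k
    have hinv1 : (volume (A x1 k))⁻¹ ≤ ENNReal.ofReal ((s k * s k)⁻¹) := by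
      rw [ENNReal.ofReal_inv_of_pos (by positivity)]
      exact ENNReal.inv_le_inv' (hAvollow x1 hx1 k)
    have hinv2 : (volume (A x1 (k+1)))⁻¹ ≤ ENNReal.ofReal ((s k * s k)⁻¹) := by
      rw [ENNReal.ofReal_inv_of_pos (by positivity)]
      apply ENNReal.inv_le_inv'
      refine le_trans (ENNReal.ofReal_le_ofReal ?_) (hAvollow x1 hx1 (k+1))
      have h6 := hsmono k
      nlinarith [hs0 (k+1)]
    have hDb : (Real.sqrt 5 * s (k+1)) ^ (2*(1+θ)) ≤ 400 * (s k) ^ (2*(1+θ)) := by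
      have h25 : (1:ℝ) ≤ 2 * Real.sqrt 5 := by
        nlinarith [Real.sq_sqrt (by norm_num : (0:ℝ) ≤ 5), Real.sqrt_nonneg 5]
      calc (Real.sqrt 5 * s (k+1)) ^ (2*(1+θ))
          ≤ ((2*Real.sqrt 5) * s k) ^ (2*(1+θ)) := by
            apply Real.rpow_le_rpow (by positivity) ?_ he0
            nlinarith [hs2 k, Real.sqrt_nonneg 5, hs0 (k+1), hs0 k]
        _ = (2*Real.sqrt 5) ^ (2*(1+θ)) * (s k) ^ (2*(1+θ)) :=
            Real.mul_rpow (by positivity) hsp.le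
        _ ≤ 400 * (s k) ^ (2*(1+θ)) := by
            apply mul_le_mul_of_nonneg_right ?_ (Real.rpow_nonneg hsp.le _)
            calc (2*Real.sqrt 5) ^ (2*(1+θ)) ≤ (2*Real.sqrt 5) ^ (4:ℝ) :=
                  Real.rpow_le_rpow_of_exponent_le h25 he4
              _ = 400 := by
                  rw [show (2*Real.sqrt 5) ^ (4:ℝ) = (2*Real.sqrt 5) ^ (4:ℕ) by
                    rw [← Real.rpow_natCast]; norm_num]
                  nlinarith [Real.sq_sqrt (by norm_num : (0:ℝ) ≤ 5), Real.sqrt_nonneg 5]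
    have h3 : ENNReal.ofReal ((m x1 k - m x1 (k+1))^2)
        ≤ ENNReal.ofReal (400 * (s k)^(2*θ-2)) * E := by
      refine (hmm x1 hx1 k).trans ?_
      calc (volume (A x1 k))⁻¹ * ((volume (A x1 (k+1)))⁻¹ *
            (ENNReal.ofReal ((Real.sqrt 5 * s (k+1)) ^ (2*(1+θ))) * E))
          ≤ ENNReal.ofReal ((s k*s k)⁻¹) * (ENNReal.ofReal ((s k*s k)⁻¹) *
              (ENNReal.ofReal (400*(s k)^(2*(1+θ))) * E)) :=
            mul_le_mul' hinv1 (mul_le_mul' hinv2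
              (mul_le_mul' (ENNReal.ofReal_le_ofReal hDb) le_rfl))
        _ = ENNReal.ofReal ((s k*s k)⁻¹ * ((s k*s k)⁻¹ * (400*(s k)^(2*(1+θ))))) * E := by
            have hsplit : ENNReal.ofReal ((s k*s k)⁻¹ * ((s k*s k)⁻¹ * (400*(s k)^(2*(1+θ)))))
                = ENNReal.ofReal ((s k*s k)⁻¹) * (ENNReal.ofReal ((s k*s k)⁻¹) *
                    ENNReal.ofReal (400*(s k)^(2*(1+θ)))) := by
              rw [ENNReal.ofReal_mul (by positivity), ENNReal.ofReal_mul (by positivity)]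
            rw [hsplit]
            ring
        _ = ENNReal.ofReal (400 * (s k)^(2*θ-2)) * E := by
            congr 1
            congr 1
            have hes : (s k) ^ (2*(1+θ)) = (s k)^(2*θ-2) * ((s k*s k)*(s k*s k)) := by
              rw [show (s k) ^ (2*(1+θ)) = (s k) ^ ((2*θ-2) + ((4:ℕ):ℝ)) by
                congr 1; push_cast; ring, Real.rpow_add hsp, Real.rpow_natCast]
              ring
            rw [hes]
            have hne : s k ≠ 0 := hsp.ne'
            field_simp
    have h4 := ENNReal.toReal_mono (ENNReal.mul_ne_top ENNReal.ofReal_ne_top hEtop) h3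
    rw [ENNReal.toReal_ofReal (sq_nonneg _), ENNReal.toReal_mul,
      ENNReal.toReal_ofReal (by positivity)] at h4
    rw [hskl] at h4
    rw [hErdef]
    exact h4
  -- pointwise estimate on R
  have hXsq : ∀ X : ℝ, 0 < X → (X^(θ-1))^2 = X^(2*θ-2) := by
    intro X hX
    rw [← Real.rpow_natCast (X^(θ-1)) 2, ← Real.rpow_mul hX.le]
    congr 1
    push_cast
    ring
  have hcore : ∀ x ∈ R, ENNReal.ofReal ((u x - meanValue S u)^2)
      ≤ ENNReal.ofReal (50*l^(2*θ)) *
          (∫⁻ z in S, ENNReal.ofReal ((u x - u z)^2 / euclDist x z ^ (2*(1+θ))))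
        + ENNReal.ofReal (800*W^2*l^(2*θ-2)*Er) := by
    intro x hx
    have hx1 : x.1 ∈ Ioo (0:ℝ) h := hx.1
    have hmM : m x.1 M = meanValue S u := by simp only [hmdef]; rw [hAM x.1 hx1]
    have htel : u x - meanValue S u
        = (u x - m x.1 0) + ∑ k ∈ Finset.range M, (m x.1 k - m x.1 (k+1)) := by
      rw [Finset.sum_range_sub' (fun k => m x.1 k) M, hmM]
      ring
    have hsum : |∑ k ∈ Finset.range M, (m x.1 k - m x.1 (k+1))|
        ≤ 20*W*l^(θ-1)*Real.sqrt Er := by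
      calc |∑ k ∈ Finset.range M, (m x.1 k - m x.1 (k+1))|
          ≤ ∑ k ∈ Finset.range M, |m x.1 k - m x.1 (k+1)| := Finset.abs_sum_le_sum_abs _ _
        _ ≤ ∑ k ∈ Finset.range M, 20*l^(θ-1)*Real.sqrt Er * ρ^k := by
            apply Finset.sum_le_sum
            intro k hk
            have hk' : k < M := Finset.mem_range.1 hk
            have hb := hbk x.1 hx1 k hk'
            have hXpos : (0:ℝ) < 2^k*l := by positivity
            have hb2 : (m x.1 k - m x.1 (k+1))^2
                ≤ (20*((2:ℝ)^k*l)^(θ-1)*Real.sqrt Er)^2 := by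
              calc (m x.1 k - m x.1 (k+1))^2 ≤ 400*((2:ℝ)^k*l)^(2*θ-2)*Er := hb
                _ = (20*((2:ℝ)^k*l)^(θ-1)*Real.sqrt Er)^2 := by
                    rw [mul_pow, mul_pow, Real.sq_sqrt hEr0, hXsq _ hXpos]
                    norm_num
            have habs := abs_le_of_sq_le_sq' hb2 (by positivity)
            have habs' : |m x.1 k - m x.1 (k+1)| ≤ 20*((2:ℝ)^k*l)^(θ-1)*Real.sqrt Er :=
              abs_le.2 habs
            refine habs'.trans (le_of_eq ?_)
            rw [Real.mul_rpow (by positivity) hl0.le]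
            rw [← Real.rpow_natCast (2:ℝ) k, ← Real.rpow_mul (by norm_num : (0:ℝ) ≤ 2)]
            rw [show ((k:ℝ))*(θ-1) = (θ-1)*(k:ℝ) by ring]
            rw [Real.rpow_mul (by norm_num : (0:ℝ) ≤ 2), Real.rpow_natCast]
            simp only [hρdef]
            ring
        _ = 20*l^(θ-1)*Real.sqrt Er * ∑ k ∈ Finset.range M, ρ^k := by rw [← Finset.mul_sum]
        _ ≤ 20*l^(θ-1)*Real.sqrt Er * W := by
            apply mul_le_mul_of_nonneg_left (my_geom_le hρ0.le hρ1 M) (by positivity)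
        _ = 20*W*l^(θ-1)*Real.sqrt Er := by ring
    have hkey1 : ENNReal.ofReal ((u x - m x.1 0)^2)
        ≤ ENNReal.ofReal (25*l^(2*θ)) *
            (∫⁻ z in S, ENNReal.ofReal ((u x - u z)^2 / euclDist x z ^ (2*(1+θ)))) := by
      refine (hptwise x.1 hx1 0 x (hxA0 x hx)).trans ?_
      rw [← mul_assoc]
      apply mul_le_mul_left
      calc (volume (A x.1 0))⁻¹ * ENNReal.ofReal ((Real.sqrt 5 * s 0)^(2*(1+θ)))
          ≤ ENNReal.ofReal ((l*l)⁻¹) * ENNReal.ofReal ((Real.sqrt 5 * l)^(2*(1+θ))) := by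
            apply mul_le_mul'
            · rw [ENNReal.ofReal_inv_of_pos (by positivity)]
              apply ENNReal.inv_le_inv'
              have hlow := hAvollow x.1 hx1 0
              rw [hs0l] at hlow
              exact hlow
            · rw [hs0l]
        _ ≤ ENNReal.ofReal (25*l^(2*θ)) := by
            rw [← ENNReal.ofReal_mul (by positivity)]
            apply ENNReal.ofReal_le_ofReal
            have h55 : Real.sqrt 5 ^ (2*(1+θ)) ≤ 25 := by
              have h15 : (1:ℝ) ≤ Real.sqrt 5 := by
                nlinarith [Real.sq_sqrt (by norm_num : (0:ℝ) ≤ 5), Real.sqrt_nonneg 5]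
              calc Real.sqrt 5 ^ (2*(1+θ)) ≤ Real.sqrt 5 ^ (4:ℝ) :=
                    Real.rpow_le_rpow_of_exponent_le h15 he4
                _ = 25 := by
                    rw [show Real.sqrt 5 ^ (4:ℝ) = Real.sqrt 5 ^ (4:ℕ) by
                      rw [← Real.rpow_natCast]; norm_num]
                    nlinarith [Real.sq_sqrt (by norm_num : (0:ℝ) ≤ 5), Real.sqrt_nonneg 5]
            have hle : l ^ (2*(1+θ)) = l^(2*θ) * (l*l) := by
              rw [show l ^ (2*(1+θ)) = l ^ (2*θ + ((2:ℕ):ℝ)) by congr 1; push_cast; ring,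
                Real.rpow_add hl0, Real.rpow_natCast]
              ring
            rw [Real.mul_rpow (Real.sqrt_nonneg 5) hl0.le, hle]
            have hl2 : (0:ℝ) ≤ l^(2*θ) := Real.rpow_nonneg hl0.le _
            rw [show (l*l)⁻¹ * (Real.sqrt 5 ^ (2*(1+θ)) * (l^(2*θ)*(l*l)))
                = Real.sqrt 5 ^ (2*(1+θ)) * l^(2*θ) * ((l*l)*(l*l)⁻¹) by ring]
            rw [mul_inv_cancel₀ (by positivity : l*l ≠ 0), mul_one]
            nlinarith
    have hre : (u x - meanValue S u)^2
        ≤ 2*(u x - m x.1 0)^2 + 800*W^2*l^(2*θ-2)*Er := by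
      rw [htel]
      have hS2 := sq_le_sq' (abs_le.1 hsum).1 (abs_le.1 hsum).2
      have h3 : (20*W*l^(θ-1)*Real.sqrt Er)^2 = 400*W^2*l^(2*θ-2)*Er := by
        rw [mul_pow, mul_pow, mul_pow, Real.sq_sqrt hEr0, hXsq l hl0]
        norm_num
      rw [h3] at hS2
      nlinarith [sq_nonneg ((u x - m x.1 0)
        - (∑ k ∈ Finset.range M, (m x.1 k - m x.1 (k+1))))]
    calc ENNReal.ofReal ((u x - meanValue S u)^2)
        ≤ ENNReal.ofReal (2*(u x - m x.1 0)^2 + 800*W^2*l^(2*θ-2)*Er) :=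
          ENNReal.ofReal_le_ofReal hre
      _ ≤ ENNReal.ofReal (2*(u x - m x.1 0)^2) + ENNReal.ofReal (800*W^2*l^(2*θ-2)*Er) :=
          ENNReal.ofReal_add_le
      _ = ENNReal.ofReal 2 * ENNReal.ofReal ((u x - m x.1 0)^2)
            + ENNReal.ofReal (800*W^2*l^(2*θ-2)*Er) := by
          rw [ENNReal.ofReal_mul (by norm_num)]
      _ ≤ ENNReal.ofReal 2 * (ENNReal.ofReal (25*l^(2*θ)) *
            (∫⁻ z in S, ENNReal.ofReal ((u x - u z)^2 / euclDist x z ^ (2*(1+θ)))))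
            + ENNReal.ofReal (800*W^2*l^(2*θ-2)*Er) :=
          add_le_add_left (mul_le_mul_right hkey1 _) _
      _ = ENNReal.ofReal (50*l^(2*θ)) *
            (∫⁻ z in S, ENNReal.ofReal ((u x - u z)^2 / euclDist x z ^ (2*(1+θ))))
            + ENNReal.ofReal (800*W^2*l^(2*θ-2)*Er) := by
          rw [← mul_assoc, ← ENNReal.ofReal_mul (by norm_num : (0:ℝ) ≤ 2),
            show (2:ℝ)*(25*l^(2*θ)) = 50*l^(2*θ) by ring]
  -- integrate over R
  have hRvol : volume R = ENNReal.ofReal h * ENNReal.ofReal l := by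
    simp only [hRdef]
    rw [volume_boxIoo, sub_zero, sub_zero]
  calc ∫⁻ x in R, ENNReal.ofReal ((u x - meanValue S u)^2)
      ≤ ∫⁻ x in R, (ENNReal.ofReal (50*l^(2*θ)) *
          (∫⁻ z in S, ENNReal.ofReal ((u x - u z)^2 / euclDist x z ^ (2*(1+θ))))
          + ENNReal.ofReal (800*W^2*l^(2*θ-2)*Er)) :=
        setLIntegral_mono ((hΦm.const_mul _).add measurable_const) hcore
    _ = ENNReal.ofReal (50*l^(2*θ)) *
          (∫⁻ x in R, ∫⁻ z in S, ENNReal.ofReal ((u x - u z)^2 / euclDist x z ^ (2*(1+θ))))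
          + ENNReal.ofReal (800*W^2*l^(2*θ-2)*Er) * volume R := by
        rw [lintegral_add_right _ measurable_const, lintegral_const_mul _ hΦm,
          setLIntegral_const]
    _ ≤ ENNReal.ofReal (50*l^(2*θ)) * E
          + ENNReal.ofReal (800*W^2*l^(2*θ-2)*Er) * (ENNReal.ofReal h * ENNReal.ofReal l) := by
        apply add_le_add
        · apply mul_le_mul_right
          rw [← hE]
          exact lintegral_mono' (Measure.restrict_mono hRS le_rfl) le_rfl
        · rw [hRvol]
    _ ≤ ENNReal.ofReal ((50 + 800*W^2) * (h * l^(2*θ-1))) * E := by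
        have t1 : ENNReal.ofReal (50*l^(2*θ)) * E
            ≤ ENNReal.ofReal (50*(h*l^(2*θ-1))) * E := by
          apply mul_le_mul_left
          apply ENNReal.ofReal_le_ofReal
          have hll : l^(2*θ) = l^(2*θ-1) * l := by
            rw [show l^(2*θ) = l^((2*θ-1)+1) by congr 1; ring, Real.rpow_add hl0,
              Real.rpow_one]
          rw [hll]
          have hpos : (0:ℝ) ≤ l^(2*θ-1) := Real.rpow_nonneg hl0.le _
          nlinarith
        have t2 : ENNReal.ofReal (800*W^2*l^(2*θ-2)*Er) * (ENNReal.ofReal h * ENNReal.ofReal l)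
            ≤ ENNReal.ofReal (800*W^2*(h*l^(2*θ-1))) * E := by
          have hq : (0:ℝ) ≤ 800*W^2*l^(2*θ-2) :=
            by positivity
          calc ENNReal.ofReal (800*W^2*l^(2*θ-2)*Er) * (ENNReal.ofReal h * ENNReal.ofReal l)
              = ENNReal.ofReal (800*W^2*(h*l^(2*θ-1))) * ENNReal.ofReal Er := by
                rw [← ENNReal.ofReal_mul hh.le, ← ENNReal.ofReal_mul (mul_nonneg hq hEr0),
                  ← ENNReal.ofReal_mul (by positivity)]
                congr 1
                rw [show l^(2*θ-1) = l^((2*θ-2)+1) by congr 1; ring, Real.rpow_add hl0,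
                  Real.rpow_one]
                ring
            _ ≤ _ := by
                apply mul_le_mul_right
                rw [hErdef]
                exact ENNReal.ofReal_toReal_le
        refine le_trans (add_le_add t1 t2) ?_
        rw [← add_mul, ← ENNReal.ofReal_add (by positivity) (by positivity)]
        apply mul_le_mul_left
        apply ENNReal.ofReal_le_ofReal
        nlinarith [Real.rpow_nonneg hl0.le (2*θ-1), sq_nonneg W, hh.le]

/-- Combination of the anisotropic projection estimate (5.8) with the
shape-regularity condition `l ≥ τ(θ)h` of Assumption (G1) and the uniform bound
(5.10): there is `C = C(θ,c)` such that
`∫_S (u − ū_K)² ≤ C (1 + ϱ(κ₀,κ₁)²) h^{2θ} |u|_{θ,S}²`. -/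
theorem anisotropic_estimate_shape_regular (θ : ℝ) (hθ : θ ∈ Set.Ioo (1/2 : ℝ) 1)
    (c : ℝ) (hc : 1 ≤ c) :
    ∃ C : ℝ, 0 < C ∧ ∀ κ₀ κ₁ : ℝ, 0 < κ₁ →
      ∀ h l : ℝ, 0 < h → tau κ₀ κ₁ θ * h ≤ l → l ≤ h →
      ∀ K : Set (ℝ × ℝ), MeasurableSet K → K ⊆ Ioo (0 : ℝ) h ×ˢ Ioo (0 : ℝ) l →
        ENNReal.ofReal (h * l / c) ≤ volume K →
        ∀ u : ℝ × ℝ → ℝ, Measurable u →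
          MemLp u 2 (volume.restrict (Ioo (0 : ℝ) h ×ˢ Ioo (0 : ℝ) h)) →
          gagliardoSq θ (Ioo (0 : ℝ) h ×ˢ Ioo (0 : ℝ) h) u < ⊤ →
          (∫⁻ x in Ioo (0 : ℝ) h ×ˢ Ioo (0 : ℝ) h,
              ENNReal.ofReal ((u x - meanValue K u) ^ 2)) ≤
            ENNReal.ofReal (C * (1 + varrho κ₀ κ₁ ^ 2) * h ^ (2 * θ)) *
              gagliardoSq θ (Ioo (0 : ℝ) h ×ˢ Ioo (0 : ℝ) h) u := by
  obtain ⟨hθ1, hθ2⟩ := hθ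
  have hc0 : (0:ℝ) < c := lt_of_lt_of_le one_pos hc
  set W : ℝ := (1 - (2:ℝ)^(θ-1))⁻¹ with hWdef
  have hρ0 : (0:ℝ) < (2:ℝ)^(θ-1) := Real.rpow_pos_of_pos two_pos _
  have hρ1 : (2:ℝ)^(θ-1) < 1 := Real.rpow_lt_one_of_one_lt_of_neg one_lt_two (by linarith)
  have hW0 : 0 < W := inv_pos.2 (by linarith)
  have hG50 : (0:ℝ) < 50 + 800*W^2 := by positivity
  refine ⟨8 + 2*c*(50 + 800*W^2), by nlinarith [mul_pos hc0 hG50], ?_⟩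
  intro κ₀ κ₁ hκ₁ h l hh hτl hlh K hKmeas hKsub hKvol u hum hu2 hGfin
  have hτ0 : 0 < tau κ₀ κ₁ θ := Real.exp_pos _
  have hl0 : 0 < l := lt_of_lt_of_le (mul_pos hτ0 hh) hτl
  set S : Set (ℝ × ℝ) := Ioo (0:ℝ) h ×ˢ Ioo (0:ℝ) h with hSdef
  set R : Set (ℝ × ℝ) := Ioo (0:ℝ) h ×ˢ Ioo (0:ℝ) l with hRdef
  have hRS : R ⊆ S := Set.prod_mono (subset_refl _) (Ioo_subset_Ioo le_rfl hlh)
  have hKS : K ⊆ S := hKsub.trans hRS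
  set E : ℝ≥0∞ := gagliardoSq θ S u with hEdef
  have hEtop : E ≠ ⊤ := hGfin.ne
  have hvolS : volume S = ENNReal.ofReal (h*h) := by
    simp only [hSdef]
    rw [volume_boxIoo, sub_zero, ← ENNReal.ofReal_mul hh.le]
  have hvolK0 : volume K ≠ 0 :=
    (lt_of_lt_of_le (ENNReal.ofReal_pos.2 (by positivity)) hKvol).ne'
  have hvolKtop : volume K ≠ ⊤ := by
    refine (lt_of_le_of_lt (measure_mono hKS) ?_).ne
    rw [hvolS]
    exact ENNReal.ofReal_lt_top
  have hmeas1 : Measurable (fun x => ENNReal.ofReal ((u x - meanValue S u)^2)) := by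
    fun_prop
  have hB1 := square_poincare hθ1 hθ2 hh hum hu2
  have hT := core_rect hθ1 hθ2 hh hl0 hlh hum hu2 hGfin
  rw [← hSdef] at hB1 hT
  rw [← hRdef] at hT
  rw [← hWdef] at hT
  rw [← hEdef] at hB1 hT
  -- mean-difference estimate over K
  have hB2 : ENNReal.ofReal ((meanValue S u - meanValue K u)^2)
      ≤ ENNReal.ofReal (c/(h*l)) * (ENNReal.ofReal ((50 + 800*W^2) * (h*l^(2*θ-1))) * E) := by
    refine (stepA hKS hu2 hvolK0 hvolKtop (meanValue S u)).trans ?_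
    have hswap : (∫⁻ y in K, ENNReal.ofReal ((meanValue S u - u y)^2))
        = ∫⁻ y in K, ENNReal.ofReal ((u y - meanValue S u)^2) := by
      apply lintegral_congr
      intro y
      rw [show (meanValue S u - u y)^2 = (u y - meanValue S u)^2 by ring]
    rw [hswap]
    have hKinv : (volume K)⁻¹ ≤ ENNReal.ofReal (c/(h*l)) := by
      calc (volume K)⁻¹ ≤ (ENNReal.ofReal (h*l/c))⁻¹ := ENNReal.inv_le_inv' hKvol
        _ = ENNReal.ofReal ((h*l/c)⁻¹) := (ENNReal.ofReal_inv_of_pos (by positivity)).symm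
        _ = ENNReal.ofReal (c/(h*l)) := by rw [inv_div]
    calc (volume K)⁻¹ * ∫⁻ y in K, ENNReal.ofReal ((u y - meanValue S u)^2)
        ≤ ENNReal.ofReal (c/(h*l)) * ∫⁻ y in R, ENNReal.ofReal ((u y - meanValue S u)^2) :=
          mul_le_mul' hKinv (lintegral_mono' (Measure.restrict_mono hKsub le_rfl) le_rfl)
      _ ≤ ENNReal.ofReal (c/(h*l)) *
            (ENNReal.ofReal ((50 + 800*W^2) * (h*l^(2*θ-1))) * E) := mul_le_mul_right hT _
  have hsplit : ∀ x : ℝ×ℝ, ENNReal.ofReal ((u x - meanValue K u)^2)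
      ≤ 2 * ENNReal.ofReal ((u x - meanValue S u)^2)
        + 2 * ENNReal.ofReal ((meanValue S u - meanValue K u)^2) := by
    intro x
    calc ENNReal.ofReal ((u x - meanValue K u)^2)
        ≤ ENNReal.ofReal (2*(u x - meanValue S u)^2
            + 2*(meanValue S u - meanValue K u)^2) := by
          apply ENNReal.ofReal_le_ofReal
          nlinarith [sq_nonneg ((u x - meanValue S u) - (meanValue S u - meanValue K u))]
      _ ≤ ENNReal.ofReal (2*(u x - meanValue S u)^2)
            + ENNReal.ofReal (2*(meanValue S u - meanValue K u)^2) := ENNReal.ofReal_add_le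
      _ = _ := by
          rw [ENNReal.ofReal_mul (by norm_num : (0:ℝ) ≤ 2),
            ENNReal.ofReal_mul (by norm_num : (0:ℝ) ≤ 2), ENNReal.ofReal_ofNat]
  have hh2θ : (0:ℝ) ≤ h^(2*θ) := Real.rpow_nonneg hh.le _
  have hl2θ : (0:ℝ) ≤ l^(2*θ-2) := Real.rpow_nonneg hl0.le _
  calc ∫⁻ x in S, ENNReal.ofReal ((u x - meanValue K u)^2)
      ≤ ∫⁻ x in S, (2 * ENNReal.ofReal ((u x - meanValue S u)^2)
          + 2 * ENNReal.ofReal ((meanValue S u - meanValue K u)^2)) :=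
        lintegral_mono hsplit
    _ = 2 * (∫⁻ x in S, ENNReal.ofReal ((u x - meanValue S u)^2))
          + (2 * ENNReal.ofReal ((meanValue S u - meanValue K u)^2)) * volume S := by
        rw [lintegral_add_right _ measurable_const, lintegral_const_mul _ hmeas1,
          setLIntegral_const]
    _ ≤ 2 * (ENNReal.ofReal (4*h^(2*θ)) * E)
          + (2 * (ENNReal.ofReal (c/(h*l)) *
              (ENNReal.ofReal ((50+800*W^2)*(h*l^(2*θ-1))) * E))) * ENNReal.ofReal (h*h) := by
        apply add_le_add
        · exact mul_le_mul_right hB1 _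
        · rw [hvolS]
          exact mul_le_mul_left (mul_le_mul_right hB2 _) _
    _ = ENNReal.ofReal (8*h^(2*θ)) * E
          + ENNReal.ofReal (2*c*(50+800*W^2)*(h*h*l^(2*θ-2))) * E := by
        congr 1
        · rw [← mul_assoc, ← ENNReal.ofReal_ofNat 2,
            ← ENNReal.ofReal_mul (by norm_num : (0:ℝ) ≤ 2),
            show (2:ℝ)*(4*h^(2*θ)) = 8*h^(2*θ) by ring]
        · calc (2 * (ENNReal.ofReal (c/(h*l)) *
                (ENNReal.ofReal ((50+800*W^2)*(h*l^(2*θ-1))) * E))) * ENNReal.ofReal (h*h)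
              = (2 * ENNReal.ofReal (c/(h*l)) *
                  ENNReal.ofReal ((50+800*W^2)*(h*l^(2*θ-1))) * ENNReal.ofReal (h*h)) * E := by
                ring
            _ = ENNReal.ofReal (2*(c/(h*l))*((50+800*W^2)*(h*l^(2*θ-1)))*(h*h)) * E := by
                rw [← ENNReal.ofReal_ofNat 2,
                  ← ENNReal.ofReal_mul (by norm_num : (0:ℝ) ≤ 2),
                  ← ENNReal.ofReal_mul (by positivity),
                  ← ENNReal.ofReal_mul (by positivity)]
            _ = ENNReal.ofReal (2*c*(50+800*W^2)*(h*h*l^(2*θ-2))) * E := by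
                congr 2
                rw [show l^(2*θ-1) = l^((2*θ-2)+1) by congr 1; ring, Real.rpow_add hl0,
                  Real.rpow_one]
                field_simp
    _ ≤ ENNReal.ofReal ((8 + 2*c*(50 + 800*W^2)) * (1 + varrho κ₀ κ₁ ^ 2) * h ^ (2*θ)) * E := by
        rw [← add_mul, ← ENNReal.ofReal_add (by positivity)
          (by positivity)]
        apply mul_le_mul_left
        apply ENNReal.ofReal_le_ofReal
        have hk := key_hl hθ1 hθ2 hκ₁ hh hl0 hτl
        have hϱ : (0:ℝ) ≤ varrho κ₀ κ₁ ^ 2 := sq_nonneg _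
        have hG0 : (0:ℝ) ≤ 2*c*(50+800*W^2) := by positivity
        nlinarith [mul_le_mul_of_nonneg_left hk hG0, mul_nonneg hϱ hh2θ,
          mul_nonneg hG0 hh2θ, mul_nonneg (mul_nonneg hG0 hϱ) hh2θ]
end

section
/- Let s ∈ (0, 1], let c₁ > 0, let h_K > 0, let B ⊆ ℝ² be a closed ball of diameter 3 h_K, let K ⊆ B be a measurable set with |K| > 0, and let h_e > 0 satisfy h_e h_K ≤ c₁ |K|. Then for every u ∈ L²(B) with |u|_{s,B} < ∞, one has h_e^{1/2} |ū_B − ū_K| ≤ 6 √(c₁/π) h_K^{s − 1/2} |u|_{s,B}, where ū_B and ū_K are the mean values of u over B and K respectively. -/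
open MeasureTheory Set
open scoped ENNReal

lemma euclDist_eq (x y : ℝ × ℝ) :
    euclDist x y = dist (Complex.measurableEquivRealProd.symm x)
      (Complex.measurableEquivRealProd.symm y) := by
  simp only [euclDist, Complex.dist_eq, Complex.norm_def, Complex.normSq_apply,
    Complex.measurableEquivRealProd_symm_apply, Complex.sub_re, Complex.sub_im]
  ring_nf

lemma euclDist_measurable : Measurable (fun p : (ℝ × ℝ) × (ℝ × ℝ) => euclDist p.1 p.2) := by
  apply Real.continuous_sqrt.measurable.comp
  fun_prop

lemma ball_facts (hK : ℝ) (z : ℝ × ℝ)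
    (B : Set (ℝ × ℝ)) (hB : B = {x : ℝ × ℝ | euclDist x z ≤ 3 * hK / 2}) :
    MeasurableSet B ∧ volume B = ENNReal.ofReal (3 * hK / 2) ^ 2 * NNReal.pi ∧
      ∀ x ∈ B, ∀ y ∈ B, euclDist x y ≤ 3 * hK := by
  have hpre : B = Complex.measurableEquivRealProd.symm ⁻¹'
      Metric.closedBall (Complex.measurableEquivRealProd.symm z) (3 * hK / 2) := by
    ext x
    rw [hB]
    simp only [mem_setOf_eq, mem_preimage, Metric.mem_closedBall, ← euclDist_eq]
  refine ⟨?_, ?_, ?_⟩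
  · rw [hpre]
    exact Complex.measurableEquivRealProd.symm.measurable measurableSet_closedBall
  · rw [hpre,
      (Complex.volume_preserving_equiv_real_prod.symm).measure_preimage
        measurableSet_closedBall.nullMeasurableSet,
      Complex.volume_closedBall]
  · intro x hx y hy
    rw [hB] at hx hy
    simp only [mem_setOf_eq] at hx hy
    have h1 : euclDist x y ≤ euclDist x z + euclDist z y := by
      rw [euclDist_eq, euclDist_eq, euclDist_eq]; exact dist_triangle _ _ _
    have h2 : euclDist z y = euclDist y z := by
      rw [euclDist_eq, euclDist_eq]; exact dist_comm _ _
    rw [h2] at h1; linarith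

/-- Cauchy–Schwarz step. -/
lemma aux_CS (s : ℝ) (hs0 : 0 < s) (hK : ℝ) (hhK : 0 < hK)
    (B K : Set (ℝ × ℝ)) (hBmeas : MeasurableSet B) (hKmeas : MeasurableSet K) (hKB : K ⊆ B)
    (hdiam : ∀ x ∈ B, ∀ y ∈ B, euclDist x y ≤ 3 * hK)
    (g : ℝ × ℝ → ℝ) (hgmeas : Measurable g) :
    (∫⁻ x in K, ∫⁻ y in B, ENNReal.ofReal |g y - g x|) ≤
      (gagliardoSq s B g) ^ (1/(2:ℝ)) *
        (ENNReal.ofReal ((3 * hK) ^ (2 * (1 + s))) * volume B * volume K) ^ (1/(2:ℝ)) := by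
  have hKle : volume.restrict K ≤ volume.restrict B := Measure.restrict_mono hKB le_rfl
  set ρ : Measure ((ℝ × ℝ) × (ℝ × ℝ)) := (volume.restrict K).prod (volume.restrict B) with hρ
  have hFmeas : Measurable (fun p : (ℝ × ℝ) × (ℝ × ℝ) => ENNReal.ofReal |g p.2 - g p.1|) :=
    ENNReal.measurable_ofReal.comp
      (((hgmeas.comp measurable_snd).sub (hgmeas.comp measurable_fst)).abs)
  have hGmeas : Measurable (fun p : (ℝ × ℝ) × (ℝ × ℝ) =>
      ENNReal.ofReal (|g p.2 - g p.1| / euclDist p.1 p.2 ^ (1 + s))) := by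
    apply ENNReal.measurable_ofReal.comp
    exact (((hgmeas.comp measurable_snd).sub (hgmeas.comp measurable_fst)).abs).div
      (euclDist_measurable.pow measurable_const)
  have hWmeas : Measurable (fun p : (ℝ × ℝ) × (ℝ × ℝ) =>
      ENNReal.ofReal (euclDist p.1 p.2 ^ (1 + s))) :=
    ENNReal.measurable_ofReal.comp (euclDist_measurable.pow measurable_const)
  have hptwise : ∀ p : (ℝ × ℝ) × (ℝ × ℝ), ENNReal.ofReal |g p.2 - g p.1| ≤
      ENNReal.ofReal (|g p.2 - g p.1| / euclDist p.1 p.2 ^ (1 + s)) *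
        ENNReal.ofReal (euclDist p.1 p.2 ^ (1 + s)) := by
    intro p
    rcases eq_or_lt_of_le (euclDist_nonneg p.1 p.2) with h0 | hpos
    · have hp : p.1 = p.2 := euclDist_eq_zero h0.symm
      simp [hp]
    · have hd : (0:ℝ) < euclDist p.1 p.2 ^ (1 + s) := Real.rpow_pos_of_pos hpos _
      rw [← ENNReal.ofReal_mul (by positivity), div_mul_cancel₀ _ hd.ne']
  have hconj : Real.HolderConjugate 2 2 := Real.holderConjugate_iff.mpr ⟨one_lt_two, by norm_num⟩
  have hCS :
      (∫⁻ x in K, ∫⁻ y in B, ENNReal.ofReal |g y - g x|) ≤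
      (∫⁻ p, ENNReal.ofReal (|g p.2 - g p.1| / euclDist p.1 p.2 ^ (1 + s)) ^ (2:ℝ) ∂ρ) ^ (1/(2:ℝ))
        * (∫⁻ p, ENNReal.ofReal (euclDist p.1 p.2 ^ (1 + s)) ^ (2:ℝ) ∂ρ) ^ (1/(2:ℝ)) := by
    have hJ : (∫⁻ x in K, ∫⁻ y in B, ENNReal.ofReal |g y - g x|) =
        ∫⁻ p, ENNReal.ofReal |g p.2 - g p.1| ∂ρ :=
      (lintegral_prod _ hFmeas.aemeasurable).symm
    rw [hJ]
    calc ∫⁻ p, ENNReal.ofReal |g p.2 - g p.1| ∂ρ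
        ≤ ∫⁻ p, ((fun p : (ℝ × ℝ) × (ℝ × ℝ) =>
              ENNReal.ofReal (|g p.2 - g p.1| / euclDist p.1 p.2 ^ (1 + s))) *
            (fun p : (ℝ × ℝ) × (ℝ × ℝ) =>
              ENNReal.ofReal (euclDist p.1 p.2 ^ (1 + s)))) p ∂ρ :=
          lintegral_mono hptwise
      _ ≤ _ := ENNReal.lintegral_mul_le_Lp_mul_Lq ρ hconj hGmeas.aemeasurable hWmeas.aemeasurable
  refine hCS.trans ?_
  have h2cast : ((2:ℝ)) = ((2:ℕ):ℝ) := by norm_num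
  have hGbound : (∫⁻ p, ENNReal.ofReal (|g p.2 - g p.1| / euclDist p.1 p.2 ^ (1 + s)) ^ (2:ℝ) ∂ρ)
      ≤ gagliardoSq s B g := by
    have hG2 : ∀ p : (ℝ × ℝ) × (ℝ × ℝ),
        ENNReal.ofReal (|g p.2 - g p.1| / euclDist p.1 p.2 ^ (1 + s)) ^ (2:ℝ) =
        ENNReal.ofReal ((g p.1 - g p.2) ^ 2 / euclDist p.1 p.2 ^ (2 * (1 + s))) := by
      intro p
      rw [ENNReal.ofReal_rpow_of_nonneg
        (div_nonneg (abs_nonneg _) (Real.rpow_nonneg (euclDist_nonneg _ _) _)) (by norm_num)]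
      congr 1
      rw [h2cast, Real.rpow_natCast, div_pow, sq_abs]
      congr 1
      · ring
      · rw [← Real.rpow_natCast (euclDist p.1 p.2 ^ (1+s)) 2,
          ← Real.rpow_mul (euclDist_nonneg _ _)]
        norm_num
        ring_nf
    have hmeas2 : Measurable fun p : (ℝ × ℝ) × (ℝ × ℝ) =>
        ENNReal.ofReal ((g p.1 - g p.2) ^ 2 / euclDist p.1 p.2 ^ (2 * (1 + s))) := by
      apply ENNReal.measurable_ofReal.comp
      exact (((hgmeas.comp measurable_fst).sub (hgmeas.comp measurable_snd)).pow_const 2).div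
        (euclDist_measurable.pow measurable_const)
    calc (∫⁻ p, ENNReal.ofReal (|g p.2 - g p.1| / euclDist p.1 p.2 ^ (1 + s)) ^ (2:ℝ) ∂ρ)
        = ∫⁻ p, ENNReal.ofReal ((g p.1 - g p.2) ^ 2 / euclDist p.1 p.2 ^ (2 * (1 + s))) ∂ρ :=
          lintegral_congr hG2
      _ = ∫⁻ x in K, ∫⁻ y in B,
            ENNReal.ofReal ((g x - g y) ^ 2 / euclDist x y ^ (2 * (1 + s))) :=
          lintegral_prod _ hmeas2.aemeasurable
      _ ≤ ∫⁻ x in B, ∫⁻ y in B,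
            ENNReal.ofReal ((g x - g y) ^ 2 / euclDist x y ^ (2 * (1 + s))) :=
          lintegral_mono' hKle le_rfl
      _ = gagliardoSq s B g := rfl
  have hWbound : (∫⁻ p, ENNReal.ofReal (euclDist p.1 p.2 ^ (1 + s)) ^ (2:ℝ) ∂ρ) ≤
      ENNReal.ofReal ((3 * hK) ^ (2 * (1 + s))) * volume B * volume K := by
    have hW2 : ∀ p : (ℝ × ℝ) × (ℝ × ℝ),
        ENNReal.ofReal (euclDist p.1 p.2 ^ (1 + s)) ^ (2:ℝ) =
        ENNReal.ofReal (euclDist p.1 p.2 ^ (2 * (1 + s))) := by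
      intro p
      rw [ENNReal.ofReal_rpow_of_nonneg (Real.rpow_nonneg (euclDist_nonneg _ _) _) (by norm_num)]
      congr 1
      rw [← Real.rpow_mul (euclDist_nonneg _ _)]
      ring_nf
    have hmeasW2 : Measurable fun p : (ℝ × ℝ) × (ℝ × ℝ) =>
        ENNReal.ofReal (euclDist p.1 p.2 ^ (2 * (1 + s))) :=
      ENNReal.measurable_ofReal.comp (euclDist_measurable.pow measurable_const)
    calc (∫⁻ p, ENNReal.ofReal (euclDist p.1 p.2 ^ (1 + s)) ^ (2:ℝ) ∂ρ)
        = ∫⁻ p, ENNReal.ofReal (euclDist p.1 p.2 ^ (2 * (1 + s))) ∂ρ :=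
          lintegral_congr hW2
      _ = ∫⁻ x in K, ∫⁻ y in B, ENNReal.ofReal (euclDist x y ^ (2 * (1 + s))) :=
          lintegral_prod _ hmeasW2.aemeasurable
      _ ≤ ∫⁻ _x in K, ∫⁻ _y in B, ENNReal.ofReal ((3 * hK) ^ (2 * (1 + s))) := by
          refine lintegral_mono_ae ?_
          filter_upwards [ae_restrict_mem hKmeas] with x hx
          refine lintegral_mono_ae ?_
          filter_upwards [ae_restrict_mem hBmeas] with y hy
          exact ENNReal.ofReal_le_ofReal
            (Real.rpow_le_rpow (euclDist_nonneg _ _) (hdiam x (hKB hx) y hy) (by positivity))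
      _ = ENNReal.ofReal ((3 * hK) ^ (2 * (1 + s))) * volume B * volume K := by
          rw [setLIntegral_const, setLIntegral_const]
  exact mul_le_mul' (ENNReal.rpow_le_rpow hGbound (by norm_num))
    (ENNReal.rpow_le_rpow hWbound (by norm_num))

/-- Mean value difference bounded by the double integral. -/
lemma aux_mean (B K : Set (ℝ × ℝ)) (hKB : K ⊆ B)
    (hvBfin : volume B ≠ ⊤) (hvBrpos : 0 < (volume B).toReal)
    (hvKfin : volume K ≠ ⊤) (hvKrpos : 0 < (volume K).toReal)
    (g : ℝ × ℝ → ℝ) (hgmeas : Measurable g) (hgint : Integrable g (volume.restrict B)) :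
    ENNReal.ofReal |meanValue B g - meanValue K g| ≤
      (∫⁻ x in K, ∫⁻ y in B, ENNReal.ofReal |g y - g x|) / (volume B * volume K) := by
  have hKle : volume.restrict K ≤ volume.restrict B := Measure.restrict_mono hKB le_rfl
  haveI : IsFiniteMeasure (volume.restrict B) :=
    ⟨by rw [Measure.restrict_apply_univ]; exact hvBfin.lt_top⟩
  haveI : IsFiniteMeasure (volume.restrict K) :=
    ⟨by rw [Measure.restrict_apply_univ]; exact hvKfin.lt_top⟩
  have hvBpos : 0 < volume B := ENNReal.toReal_pos_iff.mp hvBrpos |>.1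
  have hgintK : Integrable g (volume.restrict K) := hgint.mono_measure hKle
  have hFmeas : Measurable (fun p : (ℝ × ℝ) × (ℝ × ℝ) => ENNReal.ofReal |g p.2 - g p.1|) :=
    ENNReal.measurable_ofReal.comp
      (((hgmeas.comp measurable_snd).sub (hgmeas.comp measurable_fst)).abs)
  have hLmeas : Measurable (fun x => ∫⁻ y in B, ENNReal.ofReal |g y - g x|) :=
    hFmeas.lintegral_prod_right'
  have hLofReal : ∀ x, (∫⁻ y in B, ENNReal.ofReal |g y - g x|) =
      ENNReal.ofReal (∫ y in B, |g y - g x|) := fun x =>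
    (ofReal_integral_eq_lintegral_ofReal
      ((hgint.sub (integrable_const (g x))).abs) (ae_of_all _ fun y => abs_nonneg _)).symm
  have hLfin : ∀ x, (∫⁻ y in B, ENNReal.ofReal |g y - g x|) ≠ ⊤ := fun x => by
    rw [hLofReal x]; exact ENNReal.ofReal_ne_top
  have habs : ∀ x, |meanValue B g - g x| ≤
      (∫⁻ y in B, ENNReal.ofReal |g y - g x|).toReal / (volume B).toReal := by
    intro x
    have hamean : meanValue B g - g x = (∫ y in B, (g y - g x)) / (volume B).toReal := by
      unfold meanValue
      rw [integral_sub hgint (integrable_const (g x)), setIntegral_const, smul_eq_mul]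
      simp only [measureReal_def]
      field_simp
    rw [hamean, hLofReal x, ENNReal.toReal_ofReal (integral_nonneg fun y => abs_nonneg _),
      abs_div, abs_of_pos hvBrpos]
    gcongr
    simpa [Real.norm_eq_abs] using
      norm_integral_le_integral_norm (μ := volume.restrict B) fun y => g y - g x
  have hdiff : meanValue B g - meanValue K g =
      (∫ x in K, (meanValue B g - g x)) / (volume K).toReal := by
    unfold meanValue
    rw [integral_sub (integrable_const ((∫ x in B, g x) / (volume B).toReal)) hgintK,
      setIntegral_const, smul_eq_mul]
    simp only [measureReal_def]
    field_simp
  have hint_abs : Integrable (fun x => |meanValue B g - g x|) (volume.restrict K) :=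
    ((integrable_const (meanValue B g)).sub hgintK).abs
  have h1 : |meanValue B g - meanValue K g| ≤
      (∫ x in K, |meanValue B g - g x|) / (volume K).toReal := by
    rw [hdiff, abs_div, abs_of_pos hvKrpos]
    gcongr
    simpa [Real.norm_eq_abs] using
      norm_integral_le_integral_norm (μ := volume.restrict K) fun x => meanValue B g - g x
  refine le_trans (ENNReal.ofReal_le_ofReal h1) ?_
  rw [ENNReal.ofReal_div_of_pos hvKrpos,
    ofReal_integral_eq_lintegral_ofReal hint_abs (ae_of_all _ fun x => abs_nonneg _),
    ENNReal.ofReal_toReal hvKfin]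
  have h3 : (∫⁻ x in K, ENNReal.ofReal |meanValue B g - g x|) ≤
      (∫⁻ x in K, ∫⁻ y in B, ENNReal.ofReal |g y - g x|) / volume B := by
    have hptw : ∀ x, ENNReal.ofReal |meanValue B g - g x| ≤
        (∫⁻ y in B, ENNReal.ofReal |g y - g x|) * (volume B)⁻¹ := by
      intro x
      calc ENNReal.ofReal |meanValue B g - g x|
          ≤ ENNReal.ofReal ((∫⁻ y in B, ENNReal.ofReal |g y - g x|).toReal / (volume B).toReal) :=
            ENNReal.ofReal_le_ofReal (habs x)
        _ = (∫⁻ y in B, ENNReal.ofReal |g y - g x|) * (volume B)⁻¹ := by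
            rw [ENNReal.ofReal_div_of_pos hvBrpos, ENNReal.ofReal_toReal (hLfin x),
              ENNReal.ofReal_toReal hvBfin, div_eq_mul_inv]
    calc (∫⁻ x in K, ENNReal.ofReal |meanValue B g - g x|)
        ≤ ∫⁻ x in K, (∫⁻ y in B, ENNReal.ofReal |g y - g x|) * (volume B)⁻¹ :=
          lintegral_mono hptw
      _ = (∫⁻ x in K, ∫⁻ y in B, ENNReal.ofReal |g y - g x|) * (volume B)⁻¹ :=
          lintegral_mul_const _ hLmeas
      _ = (∫⁻ x in K, ∫⁻ y in B, ENNReal.ofReal |g y - g x|) / volume B :=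
          (div_eq_mul_inv _ _).symm
  calc (∫⁻ x in K, ENNReal.ofReal |meanValue B g - g x|) / volume K
      ≤ ((∫⁻ x in K, ∫⁻ y in B, ENNReal.ofReal |g y - g x|) / volume B) / volume K := by
        gcongr
    _ = (∫⁻ x in K, ∫⁻ y in B, ENNReal.ofReal |g y - g x|) / (volume B * volume K) := by
        rw [div_eq_mul_inv, div_eq_mul_inv, div_eq_mul_inv,
          ENNReal.mul_inv (Or.inl hvBpos.ne') (Or.inl hvBfin), mul_assoc]

/-- Short-edge estimate (5.5) of the paper: if `B` is a closed Euclidean ball of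
diameter `3h_K`, `K ⊆ B` has positive measure, and `h_e h_K ≤ c₁ |K|`, then for
`u ∈ L²(B)` with finite Gagliardo seminorm,
`h_e^{1/2} |ū_B − ū_K| ≤ 6 √(c₁/π) h_K^{s−1/2} |u|_{s,B}`. -/
theorem short_edge_estimate (s : ℝ) (hs : s ∈ Set.Ioc (0 : ℝ) 1)
    (c₁ : ℝ) (hc₁ : 0 < c₁) (hK : ℝ) (hhK : 0 < hK)
    (z : ℝ × ℝ) (B : Set (ℝ × ℝ)) (hB : B = {x : ℝ × ℝ | euclDist x z ≤ 3 * hK / 2})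
    (K : Set (ℝ × ℝ)) (hKmeas : MeasurableSet K) (hKB : K ⊆ B) (hKpos : 0 < volume K)
    (he : ℝ) (hhe : 0 < he) (hedge : he * hK ≤ c₁ * (volume K).toReal)
    (u : ℝ × ℝ → ℝ) (hu : MemLp u 2 (volume.restrict B))
    (hfin : gagliardoSq s B u < ⊤) :
    he ^ (1/2 : ℝ) * |meanValue B u - meanValue K u| ≤
      6 * Real.sqrt (c₁ / Real.pi) * hK ^ (s - 1/2) *
        Real.sqrt (gagliardoSq s B u).toReal := by
  obtain ⟨hs0, hs1⟩ := hs
  obtain ⟨hBmeas, hvolB, hdiam⟩ := ball_facts hK z B hB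
  have hKle : volume.restrict K ≤ volume.restrict B := Measure.restrict_mono hKB le_rfl
  have hvBr : (volume B).toReal = Real.pi * (3 * hK / 2) ^ 2 := by
    rw [hvolB, ENNReal.toReal_mul, ENNReal.toReal_pow, ENNReal.toReal_ofReal (by positivity)]
    simp [mul_comm]
  have hvBfin : volume B ≠ ⊤ := by
    rw [hvolB]
    exact ENNReal.mul_ne_top (ENNReal.pow_ne_top ENNReal.ofReal_ne_top) ENNReal.coe_ne_top
  have hvBrpos : 0 < (volume B).toReal := by rw [hvBr]; positivity
  have hvBpos : 0 < volume B := (ENNReal.toReal_pos_iff.mp hvBrpos).1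
  haveI : IsFiniteMeasure (volume.restrict B) :=
    ⟨by rw [Measure.restrict_apply_univ]; exact hvBfin.lt_top⟩
  have hvKfin : volume K ≠ ⊤ := ((measure_mono hKB).trans_lt hvBfin.lt_top).ne
  have hvKrpos : 0 < (volume K).toReal := ENNReal.toReal_pos hKpos.ne' hvKfin
  -- measurable representative
  obtain ⟨g, hgm, hug⟩ : ∃ g, StronglyMeasurable g ∧ u =ᵐ[volume.restrict B] g :=
    ⟨hu.1.mk u, hu.1.stronglyMeasurable_mk, hu.1.ae_eq_mk⟩
  have hgmeas : Measurable g := hgm.measurable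
  have hugK : u =ᵐ[volume.restrict K] g := ae_mono hKle hug
  have hmB : meanValue B u = meanValue B g := by
    unfold meanValue; rw [integral_congr_ae hug]
  have hmK : meanValue K u = meanValue K g := by
    unfold meanValue; rw [integral_congr_ae hugK]
  have hgag : gagliardoSq s B u = gagliardoSq s B g := by
    unfold gagliardoSq
    refine lintegral_congr_ae ?_
    filter_upwards [hug] with x hx
    refine lintegral_congr_ae ?_
    filter_upwards [hug] with y hy
    rw [hx, hy]
  rw [hmB, hmK, hgag]
  rw [hgag] at hfin
  have hgint : Integrable g (volume.restrict B) := (hu.ae_eq hug).integrable (by norm_num)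
  -- the two auxiliary bounds
  have hJle := aux_CS s hs0 hK hhK B K hBmeas hKmeas hKB hdiam g hgmeas
  have hmean := aux_mean B K hKB hvBfin hvBrpos hvKfin hvKrpos g hgmeas hgint
  set J : ℝ≥0∞ := ∫⁻ x in K, ∫⁻ y in B, ENNReal.ofReal |g y - g x| with hJdef
  set cR : ℝ := (3 * hK) ^ (2 * (1 + s)) with hcRdef
  have hcRpos : 0 < cR := Real.rpow_pos_of_pos (by positivity) _
  have hRHSfin : (gagliardoSq s B g) ^ (1/(2:ℝ)) *
      (ENNReal.ofReal cR * volume B * volume K) ^ (1/(2:ℝ)) ≠ ⊤ := by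
    apply ENNReal.mul_ne_top
    · exact (ENNReal.rpow_lt_top_of_nonneg (by norm_num) hfin.ne).ne
    · exact (ENNReal.rpow_lt_top_of_nonneg (by norm_num)
        (ENNReal.mul_ne_top (ENNReal.mul_ne_top ENNReal.ofReal_ne_top hvBfin) hvKfin)).ne
  have hJfin : J ≠ ⊤ := (hJle.trans_lt hRHSfin.lt_top).ne
  set Γr : ℝ := (gagliardoSq s B g).toReal with hΓrdef
  have hΓrnn : 0 ≤ Γr := ENNReal.toReal_nonneg
  have hJreal : J.toReal ≤ Γr ^ (1/(2:ℝ)) *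
      (cR * (volume B).toReal * (volume K).toReal) ^ (1/(2:ℝ)) := by
    have h := ENNReal.toReal_mono hRHSfin hJle
    rw [ENNReal.toReal_mul, ← ENNReal.toReal_rpow, ← ENNReal.toReal_rpow,
      ENNReal.toReal_mul, ENNReal.toReal_mul, ENNReal.toReal_ofReal hcRpos.le] at h
    exact h
  have hmean_real : |meanValue B g - meanValue K g| ≤
      Γr ^ (1/(2:ℝ)) * (cR * (volume B).toReal * (volume K).toReal) ^ (1/(2:ℝ)) /
        ((volume B).toReal * (volume K).toReal) := by
    have hne : J / (volume B * volume K) ≠ ⊤ :=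
      (ENNReal.div_lt_top hJfin (mul_ne_zero hvBpos.ne' hKpos.ne')).ne
    have h1 := ENNReal.toReal_mono hne hmean
    rw [ENNReal.toReal_ofReal (abs_nonneg _), ENNReal.toReal_div, ENNReal.toReal_mul] at h1
    refine h1.trans ?_
    gcongr
  -- final algebra
  have hsq : ∀ x : ℝ, x ^ (1/(2:ℝ)) = Real.sqrt x := fun x => (Real.sqrt_eq_rpow x).symm
  have hcRnn : (0:ℝ) ≤ cR := hcRpos.le
  have hsqrtcR : Real.sqrt cR = 3 * (3:ℝ) ^ s * (hK * hK ^ s) := by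
    have h1 : cR = ((3 * hK) ^ (1 + s)) ^ 2 := by
      rw [hcRdef, ← Real.rpow_natCast ((3*hK) ^ (1+s)) 2, ← Real.rpow_mul (by positivity)]
      norm_num
      ring_nf
    rw [h1, Real.sqrt_sq (by positivity), Real.mul_rpow (by norm_num) hhK.le,
      Real.rpow_add (by norm_num : (0:ℝ) < 3), Real.rpow_add hhK, Real.rpow_one, Real.rpow_one]
  have hsqrtvBr : Real.sqrt (volume B).toReal = Real.sqrt Real.pi * (3 * hK / 2) := by
    rw [hvBr, Real.sqrt_mul Real.pi_pos.le, Real.sqrt_sq (by positivity)]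
  have hC1 : Real.sqrt he * Real.sqrt (cR * (volume B).toReal * (volume K).toReal) /
      ((volume B).toReal * (volume K).toReal) ≤
      6 * Real.sqrt (c₁ / Real.pi) * hK ^ (s - 1/2 : ℝ) := by
    have hC1eq : Real.sqrt he * Real.sqrt (cR * (volume B).toReal * (volume K).toReal) /
        ((volume B).toReal * (volume K).toReal) =
        2 * (3:ℝ) ^ s * hK ^ s * (Real.sqrt he / Real.sqrt (volume K).toReal) /
          Real.sqrt Real.pi := by
      rw [Real.sqrt_mul (by positivity) (volume K).toReal,
        Real.sqrt_mul hcRnn (volume B).toReal, hsqrtcR, hsqrtvBr, hvBr]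
      set P : ℝ := Real.sqrt Real.pi with hPdef
      set Q : ℝ := Real.sqrt (volume K).toReal with hQdef
      have hPpos : 0 < P := Real.sqrt_pos.mpr Real.pi_pos
      have hQpos : 0 < Q := Real.sqrt_pos.mpr hvKrpos
      have hPP : Real.pi = P * P := (Real.mul_self_sqrt Real.pi_pos.le).symm
      have hQQ : (volume K).toReal = Q * Q := (Real.mul_self_sqrt hvKrpos.le).symm
      rw [hPP, hQQ]
      field_simp
    rw [hC1eq]
    have hstep2 : Real.sqrt he / Real.sqrt (volume K).toReal ≤ Real.sqrt (c₁ / hK) := by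
      rw [← Real.sqrt_div hhe.le]
      exact Real.sqrt_le_sqrt ((div_le_div_iff₀ hvKrpos hhK).mpr (by linarith [hedge]))
    have hstep3 : 2 * (3:ℝ) ^ s * hK ^ s * Real.sqrt (c₁ / hK) / Real.sqrt Real.pi =
        2 * (3:ℝ) ^ s * (Real.sqrt (c₁ / Real.pi) * hK ^ (s - 1/2 : ℝ)) := by
      rw [Real.sqrt_div hc₁.le, Real.sqrt_div hc₁.le,
        Real.rpow_sub hhK, ← Real.sqrt_eq_rpow]
      have hsqhK : 0 < Real.sqrt hK := Real.sqrt_pos.mpr hhK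
      have hsqπ : 0 < Real.sqrt Real.pi := Real.sqrt_pos.mpr Real.pi_pos
      field_simp
    have hstep4 : (3:ℝ) ^ s ≤ 3 := by
      calc (3:ℝ) ^ s ≤ (3:ℝ) ^ (1:ℝ) :=
            Real.rpow_le_rpow_of_exponent_le (by norm_num) hs1
        _ = 3 := Real.rpow_one 3
    have hXnn : 0 ≤ Real.sqrt (c₁ / Real.pi) * hK ^ (s - 1/2 : ℝ) := by positivity
    calc 2 * (3:ℝ) ^ s * hK ^ s * (Real.sqrt he / Real.sqrt (volume K).toReal) /
          Real.sqrt Real.pi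
        ≤ 2 * (3:ℝ) ^ s * hK ^ s * Real.sqrt (c₁ / hK) / Real.sqrt Real.pi := by
          gcongr
        _ = 2 * (3:ℝ) ^ s * (Real.sqrt (c₁ / Real.pi) * hK ^ (s - 1/2 : ℝ)) := hstep3
        _ ≤ 6 * Real.sqrt (c₁ / Real.pi) * hK ^ (s - 1/2 : ℝ) := by
          nlinarith [Real.rpow_pos_of_pos (by norm_num : (0:ℝ) < 3) s]
  -- put everything together
  rw [show he ^ (1/2 : ℝ) = Real.sqrt he from (Real.sqrt_eq_rpow he).symm]
  calc Real.sqrt he * |meanValue B g - meanValue K g|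
      ≤ Real.sqrt he * (Γr ^ (1/(2:ℝ)) *
          (cR * (volume B).toReal * (volume K).toReal) ^ (1/(2:ℝ)) /
          ((volume B).toReal * (volume K).toReal)) :=
        mul_le_mul_of_nonneg_left hmean_real (Real.sqrt_nonneg he)
    _ = (Real.sqrt he * Real.sqrt (cR * (volume B).toReal * (volume K).toReal) /
          ((volume B).toReal * (volume K).toReal)) * Real.sqrt Γr := by
        rw [hsq, hsq]
        ring
    _ ≤ (6 * Real.sqrt (c₁ / Real.pi) * hK ^ (s - 1/2 : ℝ)) * Real.sqrt Γr :=
        mul_le_mul_of_nonneg_right hC1 (Real.sqrt_nonneg Γr)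
    _ = 6 * Real.sqrt (c₁ / Real.pi) * hK ^ (s - 1/2) * Real.sqrt Γr := by norm_num
end
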